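/- arXiv:2312.12279 — 13 statements merged into one kernel-verified Lean document; each statement's English description precedes it below -/
import Mathlib

section
/- Let G be an abelian group and let ≼ be a total preorder on G (reflexive, transitive, and any two elements are comparable). Write x ∼ y when x ≼ y and y ≼ x, and x ≺ y when x ≼ y and not y ≼ x. Assume that for all x, y ∈ G, x ≺ y implies x + y ∼ y. Then: (1) 0 ≼ x for every x ∈ G; (2) the set N = {x ∈ G : x ∼ 0} is a subgroup of G; (3) for all x, y ∈ G, x − y ≼ x or x − y ≼ y (ultrametric inequality: the class of x − y is at most the maximum of the classes of x and y). -/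
/-- Let `G` be an abelian group and `r` a total preorder on `G` such that `x ≺ y`
implies `x + y ∼ y` (where `∼` is the associated equivalence and `≺` the strict part).
Then: (1) the class of `0` is least; (2) `{x : x ∼ 0}` is a subgroup of `G`;
(3) ultrametric inequality: `x − y ≼ x` or `x − y ≼ y`. -/
theorem valuation_of_preorder (G : Type*) [AddCommGroup G] (r : G → G → Prop)
    (hrefl : ∀ x, r x x)
    (htrans : ∀ x y z, r x y → r y z → r x z)
    (htotal : ∀ x y, r x y ∨ r y x)
    (hax : ∀ x y, r x y → ¬ r y x → (r (x + y) y ∧ r y (x + y))) :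
    (∀ x, r 0 x) ∧
    (∃ N : AddSubgroup G, (N : Set G) = {x : G | r x 0 ∧ r 0 x}) ∧
    (∀ x y, r (x - y) x ∨ r (x - y) y) := by
  -- (1) 0 is least
  have h0 : ∀ x, r 0 x := by
    intro x
    rcases htotal 0 x with h | h
    · exact h
    · by_contra hne
      have := (hax x 0 h hne).2
      exact hne (by simpa using this)
  -- x ∼ -x
  have hneg1 : ∀ x : G, r (-x) x := by
    intro x
    by_contra hne
    rcases htotal x (-x) with h | h
    · have h2 := (hax x (-x) h hne).2
      rw [add_neg_cancel] at h2
      exact hne (htrans _ _ _ h2 (h0 x))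
    · exact hne h
  have hneg : ∀ x : G, r (-x) x ∧ r x (-x) := by
    intro x
    refine ⟨hneg1 x, ?_⟩
    have := hneg1 (-x)
    rwa [neg_neg] at this
  -- ultrametric for sums
  have hkey : ∀ a b : G, r (a + b) a ∨ r (a + b) b := by
    intro a b
    rcases htotal (a + b) b with h | h
    · exact Or.inr h
    · by_cases hab : r (a + b) b
      · exact Or.inr hab
      · have h1 : r (-b) (a + b) := htrans _ _ _ (hneg1 b) h
        have h2 : ¬ r (a + b) (-b) := fun hc => hab (htrans _ _ _ hc (hneg1 b))
        have h3 := (hax (-b) (a + b) h1 h2).2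
        have : -b + (a + b) = a := by abel
        rw [this] at h3
        exact Or.inl h3
  refine ⟨h0, ?_, ?_⟩
  · refine ⟨⟨⟨⟨{x : G | r x 0 ∧ r 0 x}, ?_⟩, ?_⟩, ?_⟩, rfl⟩
    · rintro a b ⟨ha, _⟩ ⟨hb, _⟩
      refine ⟨?_, h0 _⟩
      rcases hkey a b with h | h
      · exact htrans _ _ _ h ha
      · exact htrans _ _ _ h hb
    · exact ⟨hrefl 0, hrefl 0⟩
    · rintro a ⟨ha, _⟩
      exact ⟨htrans _ _ _ ((hneg a).1) ha, h0 _⟩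
  · intro x y
    rcases hkey x (-y) with h | h
    · rw [← sub_eq_add_neg] at h
      exact Or.inl h
    · rw [← sub_eq_add_neg] at h
      exact Or.inr (htrans _ _ _ h ((hneg y).1))
end

section
/- Let d₁, d₂ ∈ M. Then G(d₁ + d₂/A) ⊆ G(d₁/A) ∪ G(d₂/A); equivalently, since the sets G(·/A) are totally ordered by inclusion, G(d₁ + d₂/A) is contained in the larger of G(d₁/A) and G(d₂/A). (Hence d ↦ G(d/A) is an A-valuation on M.) -/
/-- `c` and `d` realize the same cut over the subgroup `A`. -/
def SameCut {M : Type*} [AddCommGroup M] [LinearOrder M] [IsOrderedAddMonoid M] (A : AddSubgroup M) (c d : M) : Prop :=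
  ∀ a ∈ A, ((a ≤ c ↔ a ≤ d) ∧ (c ≤ a ↔ d ≤ a))

/-- `Stab(d/A)`: elements `a ∈ A` such that `d + a` and `d` realize the same cut over `A`. -/
def Stab {M : Type*} [AddCommGroup M] [LinearOrder M] [IsOrderedAddMonoid M] (A : AddSubgroup M) (d : M) : Set M :=
  {a | a ∈ A ∧ SameCut A (d + a) d}

open Classical in
/-- `G(d/A)`. -/
def Gset {M : Type*} [AddCommGroup M] [LinearOrder M] [IsOrderedAddMonoid M] (A : AddSubgroup M) (d : M) : Set M :=
  if d ∈ A then ({0} : Set M)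
  else {x | ∀ a ∈ A, a ∉ Stab A d → (-|a| < x ∧ x < |a|)}

/-- `H(d/A)`. -/
def Hset {M : Type*} [AddCommGroup M] [LinearOrder M] [IsOrderedAddMonoid M] (A : AddSubgroup M) (d : M) : Set M :=
  {x | ∃ a ∈ Stab A d, |x| ≤ |a|}

/-- `Δ(x) ≤ Δ(y)`: `|x| ≤ n • |y|` for some natural number `n`. -/
def DeltaLe {M : Type*} [AddCommGroup M] [LinearOrder M] [IsOrderedAddMonoid M] (x y : M) : Prop :=
  ∃ n : ℕ, |x| ≤ n • |y|

/-- `Δ(x) = Δ(y)`. -/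
def DeltaEq {M : Type*} [AddCommGroup M] [LinearOrder M] [IsOrderedAddMonoid M] (x y : M) : Prop :=
  DeltaLe x y ∧ DeltaLe y x

/-- `Δ(x) < Δ(y)`. -/
def DeltaLt {M : Type*} [AddCommGroup M] [LinearOrder M] [IsOrderedAddMonoid M] (x y : M) : Prop :=
  DeltaLe x y ∧ ¬ DeltaLe y x

/-- `Δ(x) ∈ Δ(A)`. -/
def DeltaMem {M : Type*} [AddCommGroup M] [LinearOrder M] [IsOrderedAddMonoid M] (x : M) (A : AddSubgroup M) : Prop :=
  ∃ a ∈ A, DeltaEq x a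

/-- `a` is a ramifier of `d` over `A`: `a ∈ A` and `Δ(d − a) ∉ Δ(A)`. -/
def IsRamifier {M : Type*} [AddCommGroup M] [LinearOrder M] [IsOrderedAddMonoid M] (A : AddSubgroup M) (d a : M) : Prop :=
  a ∈ A ∧ ¬ DeltaMem (d - a) A

/-- `d` is ramified over `A` if it admits a ramifier. -/
def Ramified {M : Type*} [AddCommGroup M] [LinearOrder M] [IsOrderedAddMonoid M] (A : AddSubgroup M) (d : M) : Prop :=
  ∃ a, IsRamifier A d a

/-- `d` is cut-independent from `B` over `A`: every closed interval with bounds in `B`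
containing `d` contains a point of `A`. -/
def CutIndep {M : Type*} [AddCommGroup M] [LinearOrder M] [IsOrderedAddMonoid M] (A B : AddSubgroup M) (d : M) : Prop :=
  ∀ b₁ ∈ B, ∀ b₂ ∈ B, b₁ ≤ d → d ≤ b₂ → ∃ a ∈ A, b₁ ≤ a ∧ a ≤ b₂

section Aux
variable {M : Type*} [AddCommGroup M] [LinearOrder M] [IsOrderedAddMonoid M] (A : AddSubgroup M)

lemma sameCut_refl (d : M) : SameCut A d d := fun _ _ => ⟨Iff.rfl, Iff.rfl⟩

lemma sameCut_trans {c d e : M} (h1 : SameCut A c d) (h2 : SameCut A d e) : SameCut A c e :=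
  fun a ha => ⟨(h1 a ha).1.trans (h2 a ha).1, (h1 a ha).2.trans (h2 a ha).2⟩

lemma zero_mem_stab (d : M) : (0 : M) ∈ Stab A d :=
  ⟨A.zero_mem, by simpa using sameCut_refl A d⟩

lemma abs_mem_of_mem {a : M} (ha : a ∈ A) : |a| ∈ A := by
  rcases abs_choice a with h | h
  · rwa [h]
  · rw [h]; exact A.neg_mem ha

lemma stab_neg {d a : M} (h : a ∈ Stab A d) : -a ∈ Stab A d := by
  obtain ⟨haA, hsc⟩ := h
  refine ⟨A.neg_mem haA, fun a' ha' => ?_⟩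
  have h1 := hsc (a' + a) (A.add_mem ha' haA)
  constructor
  · have e1 : a' ≤ d + -a ↔ a' + a ≤ d := by
      rw [← sub_eq_add_neg, le_sub_iff_add_le]
    have e3 : a' + a ≤ d + a ↔ a' ≤ d := add_le_add_iff_right a
    exact e1.trans (h1.1.symm.trans e3)
  · have e1 : d + -a ≤ a' ↔ d ≤ a' + a := by
      rw [← sub_eq_add_neg, sub_le_iff_le_add]
    have e3 : d + a ≤ a' + a ↔ d ≤ a' := add_le_add_iff_right a
    exact e1.trans (h1.2.symm.trans e3)

lemma stab_of_nonneg_le {d a b : M} (h : a ∈ Stab A d) (hbA : b ∈ A)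
    (hb0 : 0 ≤ b) (hba : b ≤ a) : b ∈ Stab A d := by
  obtain ⟨haA, hsc⟩ := h
  refine ⟨hbA, fun a' ha' => ?_⟩
  have h1 := hsc a' ha'
  refine ⟨⟨fun hle => h1.1.mp (hle.trans (add_le_add_right hba d)),
    fun hle => hle.trans (le_add_of_nonneg_right hb0)⟩,
    ⟨fun hle => (le_add_of_nonneg_right hb0).trans hle,
    fun hle => (add_le_add_right hba d).trans (h1.2.mpr hle)⟩⟩

lemma stab_convex {d a b : M} (h : a ∈ Stab A d) (hbA : b ∈ A)
    (hba : |b| ≤ |a|) : b ∈ Stab A d := by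
  have habs : |a| ∈ Stab A d := by
    rcases abs_choice a with h' | h'
    · rwa [h']
    · rw [h']; exact stab_neg A h
  have hbabs : |b| ∈ Stab A d :=
    stab_of_nonneg_le A habs (abs_mem_of_mem A hbA) (abs_nonneg b) hba
  rcases abs_choice b with h' | h'
  · rwa [← h']
  · have := stab_neg A hbabs
    rwa [h', neg_neg] at this

lemma stab_add {d a b : M} (ha : a ∈ Stab A d) (hb : b ∈ Stab A d) :
    a + b ∈ Stab A d := by
  refine ⟨A.add_mem ha.1 hb.1, sameCut_trans A ?_ ha.2⟩
  intro a' ha'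
  have h1 := hb.2 (a' - a) (A.sub_mem ha' ha.1)
  have key : d + (a + b) = d + b + a := by abel
  constructor
  · have e1 : a' ≤ d + (a + b) ↔ a' - a ≤ d + b := by
      rw [key, sub_le_iff_le_add]
    have e3 : a' - a ≤ d ↔ a' ≤ d + a := sub_le_iff_le_add
    exact e1.trans (h1.1.trans e3)
  · have e1 : d + (a + b) ≤ a' ↔ d + b ≤ a' - a := by
      rw [key, le_sub_iff_add_le]
    have e3 : d ≤ a' - a ↔ d + a ≤ a' := le_sub_iff_add_le
    exact e1.trans (h1.2.trans e3)

lemma stab_translate {d a₀ a : M} (ha₀ : a₀ ∈ A) :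
    a ∈ Stab A (d + a₀) ↔ a ∈ Stab A d := by
  constructor <;> intro h <;> obtain ⟨haA, hsc⟩ := h <;> refine ⟨haA, fun a' ha' => ?_⟩
  · have h1 := hsc (a' + a₀) (A.add_mem ha' ha₀)
    have key : d + a₀ + a = d + a + a₀ := by abel
    rw [key] at h1
    constructor
    · exact (add_le_add_iff_right a₀).symm.trans (h1.1.trans (add_le_add_iff_right a₀))
    · exact (add_le_add_iff_right a₀).symm.trans (h1.2.trans (add_le_add_iff_right a₀))
  · have h1 := hsc (a' - a₀) (A.sub_mem ha' ha₀)
    have key : d + a₀ + a = d + a + a₀ := by abel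
    rw [key]
    constructor
    · exact sub_le_iff_le_add.symm.trans (h1.1.trans sub_le_iff_le_add)
    · exact le_sub_iff_add_le.symm.trans (h1.2.trans le_sub_iff_add_le)

lemma exists_between_of_not_stab {d a : M} (hpos : 0 < a)
    (h : a ∉ Stab A d) (haA : a ∈ A) :
    ∃ a' ∈ A, d ≤ a' ∧ a' ≤ d + a ∧ (d < a' ∨ a' < d + a) := by
  have hsc : ¬ SameCut A (d + a) d := fun hs => h ⟨haA, hs⟩
  rw [SameCut] at hsc
  obtain ⟨a', hh⟩ := not_forall.mp hsc
  obtain ⟨ha'A, hfail⟩ := _root_.not_imp.mp hh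
  by_cases h1 : (a' ≤ d + a ↔ a' ≤ d)
  · have h2 : ¬ (d + a ≤ a' ↔ d ≤ a') := fun hh => hfail ⟨h1, hh⟩
    have hda : ¬ d + a ≤ a' := fun hle =>
      h2 ⟨fun _ => (le_add_of_nonneg_right hpos.le).trans hle, fun _ => hle⟩
    have hd : d ≤ a' := by
      by_contra hnd
      exact h2 (iff_of_false hda hnd)
    exact ⟨a', ha'A, hd, (not_le.mp hda).le, Or.inr (not_le.mp hda)⟩
  · have hnd : ¬ a' ≤ d := fun hle =>
      h1 (iff_of_true (hle.trans (le_add_of_nonneg_right hpos.le)) hle)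
    have hle : a' ≤ d + a := by
      by_contra hn
      exact h1 (iff_of_false hn hnd)
    exact ⟨a', ha'A, (not_le.mp hnd).le, hle, Or.inl (not_le.mp hnd)⟩

lemma double_not_mem_stab_add {d₁ d₂ a : M} (hpos : 0 < a) (haA : a ∈ A)
    (h1 : a ∉ Stab A d₁) (h2 : a ∉ Stab A d₂) : a + a ∉ Stab A (d₁ + d₂) := by
  obtain ⟨b₁, hb₁A, hl₁, hr₁, hs₁⟩ := exists_between_of_not_stab A hpos h1 haA
  obtain ⟨b₂, hb₂A, hl₂, hr₂, hs₂⟩ := exists_between_of_not_stab A hpos h2 haA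
  rintro ⟨-, hsc⟩
  have hm := hsc (b₁ + b₂) (A.add_mem hb₁A hb₂A)
  have hsum_le : b₁ + b₂ ≤ d₁ + d₂ + (a + a) := by
    calc b₁ + b₂ ≤ (d₁ + a) + (d₂ + a) := add_le_add hr₁ hr₂
      _ = d₁ + d₂ + (a + a) := by abel
  have hge : d₁ + d₂ ≤ b₁ + b₂ := add_le_add hl₁ hl₂
  rcases hs₁ with h | h
  · have hlt : d₁ + d₂ < b₁ + b₂ := add_lt_add_of_lt_of_le h hl₂
    exact absurd (hm.1.mp hsum_le) (not_le.mpr hlt)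
  · rcases hs₂ with h' | h'
    · have hlt : d₁ + d₂ < b₁ + b₂ := add_lt_add_of_le_of_lt hl₁ h'
      exact absurd (hm.1.mp hsum_le) (not_le.mpr hlt)
    · have hlt : b₁ + b₂ < d₁ + d₂ + (a + a) := by
        calc b₁ + b₂ < (d₁ + a) + (d₂ + a) := add_lt_add_of_le_of_lt hr₁ h'
          _ = d₁ + d₂ + (a + a) := by abel
      exact absurd (hm.2.mpr hge) (not_le.mpr hlt)

lemma not_mem_stab_add {d₁ d₂ a : M} (hpos : 0 < a) (haA : a ∈ A)
    (h1 : a ∉ Stab A d₁) (h2 : a ∉ Stab A d₂) : a ∉ Stab A (d₁ + d₂) := fun h =>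
  double_not_mem_stab_add A hpos haA h1 h2 (stab_add A h h)

lemma zero_mem_Gset (d : M) : (0 : M) ∈ Gset A d := by
  rw [Gset]
  by_cases hd : d ∈ A
  · rw [if_pos hd]; rfl
  · rw [if_neg hd]
    intro a _ hstab
    have hne : a ≠ 0 := fun h => hstab (h ▸ zero_mem_stab A d)
    have hpos : 0 < |a| := abs_pos.mpr hne
    exact ⟨neg_lt_zero.mpr hpos, hpos⟩

lemma abs_le_abs_of_not_mem_Gset {d x : M} (hd : d ∉ A) (hx : x ∉ Gset A d) :
    ∃ a ∈ A, a ∉ Stab A d ∧ |a| ≤ |x| := by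
  rw [Gset, if_neg hd] at hx
  simp only [Set.mem_setOf_eq] at hx
  push_neg at hx
  obtain ⟨a, haA, hstab, hbad⟩ := hx
  refine ⟨a, haA, hstab, ?_⟩
  by_cases hlt : -|a| < x
  · exact (hbad hlt).trans (le_abs_self x)
  · exact (le_neg_of_le_neg (not_lt.mp hlt)).trans (neg_le_abs x)

end Aux

/-- Ultrametric inequality for `d ↦ G(d/A)`:
`G(d₁ + d₂/A)` is contained in `G(d₁/A) ∪ G(d₂/A)` (i.e. in the larger of the two,
since these sets are totally ordered by inclusion). -/
theorem Gset_add_subset_union (M : Type*) [AddCommGroup M] [LinearOrder M] [IsOrderedAddMonoid M]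
    (hMdiv : ∀ x : M, ∀ n : ℕ, 0 < n → ∃ y : M, n • y = x)
    (A : AddSubgroup M)
    (hAdiv : ∀ a ∈ A, ∀ n : ℕ, 0 < n → ∃ b ∈ A, n • b = a)
    (d₁ d₂ : M) :
    Gset A (d₁ + d₂) ⊆ Gset A d₁ ∪ Gset A d₂ := by
  intro x hx
  by_cases hA : d₁ + d₂ ∈ A
  · rw [Gset, if_pos hA, Set.mem_singleton_iff] at hx
    subst hx
    exact Or.inl (zero_mem_Gset A d₁)
  · rw [Gset, if_neg hA] at hx
    by_cases h1 : d₁ ∈ A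
    · have h2 : d₂ ∉ A := fun h => hA (A.add_mem h1 h)
      right
      rw [Gset, if_neg h2]
      intro a haA hstab
      refine hx a haA (fun hs => hstab ?_)
      rw [show d₁ + d₂ = d₂ + d₁ from add_comm d₁ d₂, stab_translate A h1] at hs
      exact hs
    · by_cases h2 : d₂ ∈ A
      · left
        rw [Gset, if_neg h1]
        intro a haA hstab
        refine hx a haA (fun hs => hstab ?_)
        rw [stab_translate A h2] at hs
        exact hs
      · -- main case
        by_contra hcon
        rw [Set.mem_union] at hcon
        push_neg at hcon
        obtain ⟨a₁, ha₁A, ha₁stab, ha₁le⟩ := abs_le_abs_of_not_mem_Gset A h1 hcon.1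
        obtain ⟨a₂, ha₂A, ha₂stab, ha₂le⟩ := abs_le_abs_of_not_mem_Gset A h2 hcon.2
        set a := max |a₁| |a₂| with ha_def
        have haA : a ∈ A := by
          rcases max_choice |a₁| |a₂| with h | h
          · rw [ha_def, h]; exact abs_mem_of_mem A ha₁A
          · rw [ha_def, h]; exact abs_mem_of_mem A ha₂A
        have hane : a₁ ≠ 0 := fun h => ha₁stab (h ▸ zero_mem_stab A d₁)
        have hpos : 0 < a := lt_of_lt_of_le (abs_pos.mpr hane) (le_max_left _ _)
        have haabs : |a| = a := abs_of_pos hpos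
        have hstab1 : a ∉ Stab A d₁ := fun h =>
          ha₁stab (stab_convex A h ha₁A (by rw [haabs]; exact le_max_left _ _))
        have hstab2 : a ∉ Stab A d₂ := fun h =>
          ha₂stab (stab_convex A h ha₂A (by rw [haabs]; exact le_max_right _ _))
        have hnot := not_mem_stab_add A hpos haA hstab1 hstab2
        have hb := hx a haA hnot
        have hxlt : |x| < a := by
          rw [← haabs]
          exact abs_lt.mpr hb
        have hax : a ≤ |x| := max_le ha₁le ha₂le
        exact absurd hxlt (not_lt.mpr hax)
end

section
/- Let d ∈ M with d ∉ A, and let d' ∈ M. If G(d/A) is strictly contained in G(d'/A), then G(d/A) is strictly contained in H(d'/A). -/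
/-- If `G(d/A)` is strictly contained in `G(d'/A)`, then `G(d/A)` is strictly
contained in `H(d'/A)`. -/
theorem Gset_ssubset_Hset (M : Type*) [AddCommGroup M] [LinearOrder M] [IsOrderedAddMonoid M]
    (hMdiv : ∀ x : M, ∀ n : ℕ, 0 < n → ∃ y : M, n • y = x)
    (A : AddSubgroup M)
    (hAdiv : ∀ a ∈ A, ∀ n : ℕ, 0 < n → ∃ b ∈ A, n • b = a)
    (d d' : M) (hd : d ∉ A)
    (hss : Gset A d ⊂ Gset A d') :
    Gset A d ⊂ Hset A d' := by
  classical
  have hstab0 : (0 : M) ∈ Stab A d := ⟨A.zero_mem, fun a _ => by simp⟩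
  -- membership characterization of Gset A d (since d ∉ A)
  have hGd : Gset A d = {x | ∀ a ∈ A, a ∉ Stab A d → (-|a| < x ∧ x < |a|)} := by
    simp [Gset, hd]
  have h0G : (0 : M) ∈ Gset A d := by
    rw [hGd]
    intro a _ hanstab
    have hane : a ≠ 0 := fun h => hanstab (h ▸ hstab0)
    constructor
    · simpa using abs_pos.mpr hane
    · exact abs_pos.mpr hane
  obtain ⟨x, hxG', hxGd⟩ := Set.not_subset.mp hss.2
  -- d' ∉ A
  have hd' : d' ∉ A := by
    intro hd'A
    have : x = 0 := by simpa [Gset, hd'A] using hxG'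
    exact hxGd (this ▸ h0G)
  have hxG'' : ∀ a ∈ A, a ∉ Stab A d' → (-|a| < x ∧ x < |a|) := by
    simpa [Gset, hd'] using hxG'
  -- get a ∈ A \ Stab A d with |a| ≤ |x|
  have : ∃ a ∈ A, a ∉ Stab A d ∧ |a| ≤ |x| := by
    rw [hGd, Set.mem_setOf_eq] at hxGd
    push_neg at hxGd
    obtain ⟨a, haA, hans, habs⟩ := hxGd
    refine ⟨a, haA, hans, ?_⟩
    rcases lt_or_ge (-|a|) x with h1 | h1
    · exact le_abs.mpr (Or.inl (habs h1))
    · exact le_abs.mpr (Or.inr (le_neg.mp h1))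
  obtain ⟨a, haA, hans, hax⟩ := this
  -- a ∈ Stab A d'
  have hastab' : a ∈ Stab A d' := by
    by_contra h
    have h2 := hxG'' a haA h
    have hlt : |x| < |a| := abs_lt.mpr ⟨h2.1, h2.2⟩
    exact absurd (lt_of_le_of_lt hax hlt) (lt_irrefl _)
  constructor
  · -- Gset A d ⊆ Hset A d'
    intro y hy
    rw [hGd] at hy
    have hya := hy a haA hans
    exact ⟨a, hastab', le_of_lt (abs_lt.mpr ⟨hya.1, hya.2⟩)⟩
  · -- not superset: a ∈ Hset A d' but a ∉ Gset A d
    intro hsub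
    have haH : a ∈ Hset A d' := ⟨a, hastab', le_refl _⟩
    have := hsub haH
    rw [hGd] at this
    have h3 := this a haA hans
    exact absurd (abs_lt.mpr ⟨h3.1, h3.2⟩) (lt_irrefl _)
end

section
/- Let A ⊆ B be divisible subgroups of M and d ∈ M. If d is cut-independent from B over A, then H(d/A) ⊆ H(d/B); equivalently, Stab(d/A) ⊆ Stab(d/B). -/
/-- If `d` is cut-independent from `B` over `A`, then `H(d/A) ⊆ H(d/B)`;
equivalently, `Stab(d/A) ⊆ Stab(d/B)`. -/
theorem Hset_subset_of_cutIndep (M : Type*) [AddCommGroup M] [LinearOrder M] [IsOrderedAddMonoid M]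
    (hMdiv : ∀ x : M, ∀ n : ℕ, 0 < n → ∃ y : M, n • y = x)
    (A B : AddSubgroup M) (hAB : A ≤ B)
    (hAdiv : ∀ a ∈ A, ∀ n : ℕ, 0 < n → ∃ b ∈ A, n • b = a)
    (hBdiv : ∀ b ∈ B, ∀ n : ℕ, 0 < n → ∃ b' ∈ B, n • b' = b)
    (d : M) (hind : CutIndep A B d) :
    Hset A d ⊆ Hset B d ∧ Stab A d ⊆ Stab B d := by
  have key : Stab A d ⊆ Stab B d := by
    rintro a ⟨haA, hsc⟩
    refine ⟨hAB haA, ?_⟩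
    intro b hb
    constructor
    · constructor
      · intro hbda
        by_contra hbd
        push_neg at hbd
        obtain ⟨a', ha'A, h1, h2⟩ :=
          hind (b - a) (B.sub_mem hb (hAB haA)) b hb (sub_le_iff_le_add.mpr hbda) hbd.le
        rcases le_or_gt a' d with h | h
        · have h3 := (hsc (a' + a) (A.add_mem ha'A haA)).1.1 (add_le_add_left h a)
          exact hbd.not_ge ((sub_le_iff_le_add.mp h1).trans h3)
        · exact h.not_ge ((hsc a' ha'A).1.1 (h2.trans hbda))
      · intro hbd
        by_contra h'
        push_neg at h'
        obtain ⟨a', ha'A, h1, h2⟩ :=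
          hind b hb (b - a) (B.sub_mem hb (hAB haA)) hbd (le_sub_iff_add_le.mpr h'.le)
        rcases le_or_gt a' d with h | h
        · exact (h'.trans_le h1).not_ge ((hsc a' ha'A).1.2 h)
        · have h3 := (hsc (a' + a) (A.add_mem ha'A haA)).1.2
            ((add_le_of_le_sub_right h2).trans hbd)
          exact h.not_ge (le_of_add_le_add_right h3)
    · constructor
      · intro hdab
        by_contra hbd
        push_neg at hbd
        obtain ⟨a', ha'A, h1, h2⟩ :=
          hind b hb (b - a) (B.sub_mem hb (hAB haA)) hbd.le (le_sub_iff_add_le.mpr hdab)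
        rcases lt_or_ge a' d with h | h
        · exact h.not_ge ((hsc a' ha'A).2.1 (hdab.trans h1))
        · have h3 := (hsc (a' + a) (A.add_mem ha'A haA)).2.1 (add_le_add_left h a)
          exact ((add_le_of_le_sub_right h2).trans_lt hbd).not_ge h3
      · intro hdb
        by_contra h'
        push_neg at h'
        obtain ⟨a', ha'A, h1, h2⟩ :=
          hind (b - a) (B.sub_mem hb (hAB haA)) b hb (sub_le_iff_le_add.mpr h'.le) hdb
        rcases lt_or_ge a' d with h | h
        · have h3 := (hsc (a' + a) (A.add_mem ha'A haA)).2.2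
            (hdb.trans (sub_le_iff_le_add.mp h1))
          exact h.not_ge (le_of_add_le_add_right h3)
        · exact (h2.trans_lt h').not_ge ((hsc a' ha'A).2.2 h)
  exact ⟨fun x ⟨a, ha, hle⟩ => ⟨a, key ha, hle⟩, key⟩
end

section
/- Let a ∈ A and d ∈ M. The following are equivalent: (1) d − a ∈ G(d/A) and d ∉ A; (2) Δ(d − a) ∉ Δ(A). -/
lemma not_mem_stab_of_deltaLe {M : Type*} [AddCommGroup M] [LinearOrder M] [IsOrderedAddMonoid M]
    {A : AddSubgroup M} {d a b : M} (ha : a ∈ A) (hbA : b ∈ A) (hb0 : 0 < b)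
    {n : ℕ} (hn : |d - a| ≤ n • b) : b ∉ Stab A d := by
  classical
  rintro ⟨-, hsc⟩
  rcases le_or_gt a d with hda | hda
  · have hex : ∃ k : ℕ, d < a + k • b := by
      refine ⟨n + 1, ?_⟩
      have h1 : d ≤ a + n • b := sub_le_iff_le_add'.1 ((le_abs_self _).trans hn)
      calc d ≤ a + n • b := h1
        _ < a + n • b + b := lt_add_of_pos_right _ hb0
        _ = a + (n + 1) • b := by rw [succ_nsmul, add_assoc]
    have hk : d < a + Nat.find hex • b := Nat.find_spec hex
    have hk1 : Nat.find hex ≠ 0 := by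
      intro h
      rw [h] at hk; simp at hk; exact absurd hda (not_le.2 hk)
    obtain ⟨j, hkj⟩ : ∃ j, Nat.find hex = j + 1 :=
      ⟨Nat.find hex - 1, (Nat.succ_pred_eq_of_pos (Nat.pos_of_ne_zero hk1)).symm⟩
    have hmin : ¬ d < a + j • b := Nat.find_min hex (by omega)
    push_neg at hmin
    rw [hkj] at hk
    have hle : a + (j + 1) • b ≤ d + b := by
      rw [succ_nsmul, ← add_assoc]
      exact add_le_add_left hmin b
    have hmem : a + (j + 1) • b ∈ A := A.add_mem ha (A.nsmul_mem hbA _)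
    exact absurd (((hsc _ hmem).1).1 hle) (not_le.2 hk)
  · have hex : ∃ k : ℕ, a - k • b < d + b := by
      refine ⟨n + 1, ?_⟩
      have h1 : a - n • b ≤ d := by
        rw [sub_le_comm]
        rw [abs_sub_comm] at hn
        exact (le_abs_self _).trans hn
      calc a - (n + 1) • b = a - n • b - b := by rw [succ_nsmul]; abel
        _ ≤ d - b := sub_le_sub_right h1 b
        _ < d + b := (sub_lt_self d hb0).trans (lt_add_of_pos_right d hb0)
    have hk : a - Nat.find hex • b < d + b := Nat.find_spec hex
    have hd_le : d ≤ a - Nat.find hex • b := by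
      rcases Nat.eq_zero_or_pos (Nat.find hex) with h0 | hpos
      · rw [h0]; simpa using hda.le
      · obtain ⟨j, hkj⟩ : ∃ j, Nat.find hex = j + 1 :=
          ⟨Nat.find hex - 1, (Nat.succ_pred_eq_of_pos hpos).symm⟩
        have hmin : ¬ a - j • b < d + b := Nat.find_min hex (by omega)
        push_neg at hmin
        rw [hkj]
        calc d = d + b - b := by abel
          _ ≤ a - j • b - b := sub_le_sub_right hmin b
          _ = a - (j + 1) • b := by rw [succ_nsmul]; abel
    have hmem : a - Nat.find hex • b ∈ A := A.sub_mem ha (A.nsmul_mem hbA _)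
    exact absurd (((hsc _ hmem).2).2 hd_le) (not_le.2 hk)

/-- For `a ∈ A` and `d ∈ M`: `d − a ∈ G(d/A)` and `d ∉ A`, if and only if
`Δ(d − a) ∉ Δ(A)`. -/
theorem sub_mem_Gset_iff_delta_not_mem (M : Type*) [AddCommGroup M] [LinearOrder M] [IsOrderedAddMonoid M]
    (hMdiv : ∀ x : M, ∀ n : ℕ, 0 < n → ∃ y : M, n • y = x)
    (A : AddSubgroup M)
    (hAdiv : ∀ a ∈ A, ∀ n : ℕ, 0 < n → ∃ b ∈ A, n • b = a)
    (a : M) (ha : a ∈ A) (d : M) :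
    (d - a ∈ Gset A d ∧ d ∉ A) ↔ ¬ DeltaMem (d - a) A := by
  constructor
  · rintro ⟨hG, hdA⟩ hmem
    obtain ⟨b, hbA, ⟨n, hcb⟩, ⟨m, hbc⟩⟩ := hmem
    have hc0 : d - a ≠ 0 := by
      intro h
      exact hdA (by rw [sub_eq_zero.1 h]; exact ha)
    have hcpos : 0 < |d - a| := abs_pos.2 hc0
    have hbpos : 0 < |b| := by
      rcases (abs_nonneg b).lt_or_eq with h | h
      · exact h
      · exfalso
        rw [← h, smul_zero] at hcb
        exact absurd hcb (not_le.2 hcpos)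
    have hm0 : 0 < m := by
      rcases Nat.eq_zero_or_pos m with h | h
      · rw [h, zero_smul] at hbc; exact absurd hbc (not_le.2 hbpos)
      · exact h
    have habsA : |b| ∈ A := by
      rcases abs_choice b with h | h <;> rw [h]
      · exact hbA
      · exact A.neg_mem hbA
    obtain ⟨b', hb'A, hb'⟩ := hAdiv |b| habsA m hm0
    have hb'pos : 0 < b' := by
      by_contra h
      push_neg at h
      have : m • b' ≤ 0 := nsmul_nonpos h m
      rw [hb'] at this
      exact absurd this (not_le.2 hbpos)
    have hb'le : b' ≤ |d - a| := by
      by_contra h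
      push_neg at h
      have h2 : m • |d - a| < m • b' := nsmul_lt_nsmul_right hm0.ne' h
      rw [hb'] at h2
      exact lt_irrefl |b| (hbc.trans_lt h2)
    have hn' : |d - a| ≤ (n * m) • b' := by
      calc |d - a| ≤ n • |b| := hcb
        _ = n • (m • b') := by rw [hb']
        _ = (n * m) • b' := (smul_smul n m b')
    have hstab := not_mem_stab_of_deltaLe ha hb'A hb'pos hn'
    rw [Gset, if_neg hdA] at hG
    have hpair := hG b' hb'A hstab
    have hlt : |d - a| < b' := by
      rw [abs_of_pos hb'pos] at hpair
      exact abs_lt.2 hpair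
    exact absurd hb'le (not_le.2 hlt)
  · intro hnot
    have hdA : d ∉ A := by
      intro hd
      exact hnot ⟨d - a, A.sub_mem hd ha, ⟨1, by simp⟩, ⟨1, by simp⟩⟩
    refine ⟨?_, hdA⟩
    rw [Gset, if_neg hdA]
    intro b hbA hbst
    rw [← abs_lt]
    by_contra h
    push_neg at h
    have hble : DeltaLe b (d - a) := ⟨1, by simpa using h⟩
    have hbig : ∀ k : ℕ, k • |b| < |d - a| := by
      intro k
      by_contra hk
      push_neg at hk
      exact hnot ⟨b, hbA, ⟨k, hk⟩, hble⟩
    have hfar : ∀ a' ∈ (A : Set M), ¬ |a' - d| ≤ |b| := by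
      intro a' ha' hcl
      have heA : a' - a ∈ A := A.sub_mem ha' ha
      have h1 : |d - a| ≤ |a' - d| + |a' - a| := by
        calc |d - a| = |(d - a') + (a' - a)| := by rw [sub_add_sub_cancel]
          _ ≤ |d - a'| + |a' - a| := abs_add_le _ _
          _ = |a' - d| + |a' - a| := by rw [abs_sub_comm d a']
      have h2 : |d - a| ≤ |b| + |a' - a| := h1.trans (add_le_add_left hcl _)
      have hb_lt_e : |b| < |a' - a| := by
        have h3 : |b| + |b| < |d - a| := by
          have := hbig 2
          rwa [two_nsmul] at this
        exact lt_of_add_lt_add_left (h3.trans_le h2)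
      have hb_le_c : |b| ≤ |d - a| := by
        have := hbig 1
        rw [one_nsmul] at this
        exact this.le
      have hLe1 : DeltaLe (d - a) (a' - a) := by
        refine ⟨2, ?_⟩
        rw [two_nsmul]
        calc |d - a| ≤ |b| + |a' - a| := h2
          _ ≤ |a' - a| + |a' - a| := add_le_add_left hb_lt_e.le _
      have hLe2 : DeltaLe (a' - a) (d - a) := by
        refine ⟨2, ?_⟩
        rw [two_nsmul]
        calc |a' - a| = |(a' - d) + (d - a)| := by rw [sub_add_sub_cancel]
          _ ≤ |a' - d| + |d - a| := abs_add_le _ _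
          _ ≤ |b| + |d - a| := add_le_add_left hcl _
          _ ≤ |d - a| + |d - a| := add_le_add_left hb_le_c _
      exact hnot ⟨a' - a, heA, hLe1, hLe2⟩
    refine absurd ⟨hbA, fun a' ha' => ⟨⟨?_, ?_⟩, ⟨?_, ?_⟩⟩⟩ hbst
    · intro h1
      by_contra h2
      push_neg at h2
      refine hfar a' ha' (abs_le.2 ⟨?_, ?_⟩)
      · exact (neg_nonpos.2 (abs_nonneg b)).trans (sub_nonneg.2 h2.le)
      · exact (sub_le_iff_le_add'.2 h1).trans (le_abs_self b)
    · intro h1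
      by_contra h2
      push_neg at h2
      refine hfar a' ha' (abs_le.2 ⟨?_, ?_⟩)
      · exact (neg_abs_le b).trans (lt_sub_iff_add_lt'.2 h2).le
      · exact (sub_nonpos.2 h1).trans (abs_nonneg b)
    · intro h1
      by_contra h2
      push_neg at h2
      refine hfar a' ha' (abs_le.2 ⟨?_, ?_⟩)
      · exact (neg_abs_le b).trans (le_sub_iff_add_le'.2 h1)
      · exact (sub_nonpos.2 h2.le).trans (abs_nonneg b)
    · intro h1
      by_contra h2
      push_neg at h2
      refine hfar a' ha' (abs_le.2 ⟨?_, ?_⟩)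
      · exact (neg_nonpos.2 (abs_nonneg b)).trans (sub_nonneg.2 h1)
      · exact (sub_lt_iff_lt_add'.2 h2).le.trans (le_abs_self b)
end

section
/- Let d ∈ M with d ∉ A, and let a ∈ A. Then d − a ∉ H(d/A); that is, there is no a' ∈ Stab(d/A) with |d − a| ≤ |a'|. -/
/-- For `d ∉ A` and `a ∈ A`, `d − a ∉ H(d/A)`: there is no `a' ∈ Stab(d/A)`
with `|d − a| ≤ |a'|`. -/
theorem sub_not_mem_Hset (M : Type*) [AddCommGroup M] [LinearOrder M] [IsOrderedAddMonoid M]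
    (hMdiv : ∀ x : M, ∀ n : ℕ, 0 < n → ∃ y : M, n • y = x)
    (A : AddSubgroup M)
    (hAdiv : ∀ a ∈ A, ∀ n : ℕ, 0 < n → ∃ b ∈ A, n • b = a)
    (d : M) (hd : d ∉ A) (a : M) (ha : a ∈ A) :
    d - a ∉ Hset A d := by
  rintro ⟨a', ⟨ha'A, hsc⟩, hle⟩
  have hself : d - a ≤ |a'| := (le_abs_self (d - a)).trans hle
  have hself' : a - d ≤ |a'| := by
    rw [abs_sub_comm] at hle
    exact (le_abs_self (a - d)).trans hle
  have hmem : a + a' ∈ A := A.add_mem ha ha'A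
  have heq : d = a := by
    rcases le_total a d with had | hda
    · rcases le_total 0 a' with h0 | h0
      · have h1 : d ≤ a + a' := by
          rw [abs_of_nonneg h0] at hself
          exact sub_le_iff_le_add'.mp hself
        have h2 : d + a' ≤ a + a' := (hsc _ hmem).2.mpr h1
        exact le_antisymm (le_of_add_le_add_right h2) had
      · have h1 : d + a' ≤ a := by
          rw [abs_of_nonpos h0] at hself
          have h := sub_le_iff_le_add'.mp hself
          rw [← sub_eq_add_neg] at h
          exact le_sub_iff_add_le.mp h
        exact le_antisymm ((hsc a ha).2.mp h1) had
    · rcases le_total 0 a' with h0 | h0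
      · have h1 : a ≤ d + a' := by
          rw [abs_of_nonneg h0] at hself'
          exact sub_le_iff_le_add'.mp hself'
        exact le_antisymm hda ((hsc a ha).1.mp h1)
      · have h1 : a + a' ≤ d := by
          rw [abs_of_nonpos h0] at hself'
          have h := sub_le_iff_le_add'.mp hself'
          rw [← sub_eq_add_neg] at h
          exact le_sub_iff_add_le.mp h
        have h2 : a + a' ≤ d + a' := (hsc _ hmem).1.mpr h1
        exact le_antisymm hda (le_of_add_le_add_right h2)
  exact hd (heq ▸ ha)
end

section
/- Let d, d' ∈ M. If d and d' realize the same cut over A, then d − d' ∈ G(d/A). -/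
/-- If no element of `A` lies in `[e, d]` and `|a| ≤ d - e` with `a ∈ A`,
then `d + a` and `d` realize the same cut over `A`. -/
lemma sameCut_add_of_right {M : Type*} [AddCommGroup M] [LinearOrder M] [IsOrderedAddMonoid M] (A : AddSubgroup M)
    (d e : M) (he : ∀ b ∈ A, ¬(e ≤ b ∧ b ≤ d)) (a : M) (ha : a ∈ A)
    (hae : e ≤ d - |a|) : SameCut A (d + a) d := by
  intro b hb
  rcases le_or_gt 0 a with h0 | h0
  · rw [abs_of_nonneg h0] at hae
    have hba : b - a ∈ A := A.sub_mem hb ha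
    constructor
    · constructor
      · intro hle
        by_contra hlt
        push_neg at hlt
        exact he (b - a) hba
          ⟨hae.trans (sub_le_sub_right hlt.le a), sub_le_iff_le_add.mpr hle⟩
      · intro hle; exact hle.trans (le_add_of_nonneg_right h0)
    · constructor
      · intro hle; exact (le_add_of_nonneg_right h0).trans hle
      · intro hle
        by_contra hlt
        push_neg at hlt
        exact he (b - a) hba
          ⟨hae.trans (sub_le_sub_right hle a), sub_le_iff_le_add.mpr hlt.le⟩
  · rw [abs_of_neg h0, sub_neg_eq_add] at hae
    constructor
    · constructor
      · intro hle; exact hle.trans (add_le_of_nonpos_right h0.le)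
      · intro hle
        by_contra hlt
        push_neg at hlt
        exact he b hb ⟨hae.trans hlt.le, hle⟩
    · constructor
      · intro hle
        by_contra hlt
        push_neg at hlt
        exact he b hb ⟨hae.trans hle, hlt.le⟩
      · intro hle; exact (add_le_of_nonpos_right h0.le).trans hle

/-- If no element of `A` lies in `[d, e]` and `|a| ≤ e - d` with `a ∈ A`,
then `d + a` and `d` realize the same cut over `A`. -/
lemma sameCut_add_of_left {M : Type*} [AddCommGroup M] [LinearOrder M] [IsOrderedAddMonoid M] (A : AddSubgroup M)
    (d e : M) (he : ∀ b ∈ A, ¬(d ≤ b ∧ b ≤ e)) (a : M) (ha : a ∈ A)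
    (hae : d + |a| ≤ e) : SameCut A (d + a) d := by
  intro b hb
  rcases le_or_gt 0 a with h0 | h0
  · rw [abs_of_nonneg h0] at hae
    constructor
    · constructor
      · intro hle
        by_contra hlt
        push_neg at hlt
        exact he b hb ⟨hlt.le, hle.trans hae⟩
      · intro hle; exact hle.trans (le_add_of_nonneg_right h0)
    · constructor
      · intro hle; exact (le_add_of_nonneg_right h0).trans hle
      · intro hle
        by_contra hlt
        push_neg at hlt
        exact he b hb ⟨hle, hlt.le.trans hae⟩
  · rw [abs_of_neg h0] at hae
    have hae' : d - a ≤ e := by rwa [sub_eq_add_neg]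
    have hba : b - a ∈ A := A.sub_mem hb ha
    constructor
    · constructor
      · intro hle; exact hle.trans (add_le_of_nonpos_right h0.le)
      · intro hle
        by_contra hlt
        push_neg at hlt
        exact he (b - a) hba
          ⟨le_sub_iff_add_le.mpr hlt.le, (sub_le_sub_right hle a).trans hae'⟩
    · constructor
      · intro hle
        by_contra hlt
        push_neg at hlt
        exact he (b - a) hba
          ⟨le_sub_iff_add_le.mpr hle, (sub_le_sub_right hlt.le a).trans hae'⟩
      · intro hle; exact (add_le_of_nonpos_right h0.le).trans hle

/-- If `d` and `d'` realize the same cut over `A`, then `d − d' ∈ G(d/A)`. -/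
theorem sub_mem_Gset_of_sameCut (M : Type*) [AddCommGroup M] [LinearOrder M] [IsOrderedAddMonoid M]
    (hMdiv : ∀ x : M, ∀ n : ℕ, 0 < n → ∃ y : M, n • y = x)
    (A : AddSubgroup M)
    (hAdiv : ∀ a ∈ A, ∀ n : ℕ, 0 < n → ∃ b ∈ A, n • b = a)
    (d d' : M) (h : SameCut A d d') :
    d - d' ∈ Gset A d := by
  by_cases hd : d ∈ A
  · -- then d = d'
    have h1 := h d hd
    have hdd : d = d' := le_antisymm (h1.1.mp le_rfl) (h1.2.mp le_rfl)
    unfold Gset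
    rw [if_pos hd]
    simp [hdd]
  · unfold Gset
    rw [if_neg hd]
    -- no element of A lies weakly between d and d'
    have hint : ∀ b ∈ A, (d' ≤ b ∨ d ≤ b) → (b ≤ d' ∨ b ≤ d) → False := by
      intro b hb hlo hhi
      have h1 := h b hb
      have hdb : d ≤ b := by
        rcases hlo with hl | hl
        · exact h1.2.mpr hl
        · exact hl
      have hbd : b ≤ d := by
        rcases hhi with hl | hl
        · exact h1.1.mpr hl
        · exact hl
      exact hd (le_antisymm hdb hbd ▸ hb)
    intro a ha haS
    by_contra hcon
    push_neg at hcon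
    apply haS
    refine ⟨ha, ?_⟩
    rcases le_or_gt (d - d') (-|a|) with hle | hlt
    · -- d + |a| ≤ d'
      have h2 : |a| ≤ d' - d := by
        have := neg_le_neg hle
        rwa [neg_neg, neg_sub] at this
      exact sameCut_add_of_left A d d'
        (fun b hb hbmem => hint b hb (Or.inr hbmem.1) (Or.inl hbmem.2)) a ha
        (add_le_of_le_sub_left h2)
    · -- |a| ≤ d - d'
      have hge' : |a| ≤ d - d' := hcon hlt
      have h2 : d' ≤ d - |a| := le_sub_iff_add_le.mpr (le_sub_iff_add_le'.mp hge')
      exact sameCut_add_of_right A d d'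
        (fun b hb hbmem => hint b hb (Or.inl hbmem.1) (Or.inr hbmem.2)) a ha h2
end

section
/- Let d ∈ M be ramified over A and let a ∈ A be a ramifier of d over A. Then for every a' ∈ A: Δ(a') < Δ(d − a) if and only if a' ∈ Stab(d/A); moreover Δ(a') ≠ Δ(d − a). (Thus the Archimedean class δ(d/A) := Δ(d − a) realizes over Δ(A) exactly the cut just above the Archimedean classes of elements of Stab(d/A).) -/
/-- If `d` is ramified over `A` with ramifier `a`, then for every `a' ∈ A`:
`Δ(a') < Δ(d − a)` iff `a' ∈ Stab(d/A)`, and moreover `Δ(a') ≠ Δ(d − a)`. -/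
theorem delta_lt_iff_mem_stab_of_ramifier (M : Type*) [AddCommGroup M] [LinearOrder M] [IsOrderedAddMonoid M]
    (hMdiv : ∀ x : M, ∀ n : ℕ, 0 < n → ∃ y : M, n • y = x)
    (A : AddSubgroup M)
    (hAdiv : ∀ a ∈ A, ∀ n : ℕ, 0 < n → ∃ b ∈ A, n • b = a)
    (d a : M) (hram : IsRamifier A d a) :
    ∀ a' ∈ A, (DeltaLt a' (d - a) ↔ a' ∈ Stab A d) ∧ ¬ DeltaEq a' (d - a) := by
  obtain ⟨ha, hnm⟩ := hram
  intro a' ha'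
  refine ⟨⟨?_, ?_⟩, ?_⟩
  · -- forward: DeltaLt a' (d - a) → a' ∈ Stab A d
    rintro ⟨hle, hnle⟩
    have hnle' : ∀ n : ℕ, n • |a'| < |d - a| := fun n =>
      lt_of_not_ge (fun h => hnle ⟨n, h⟩)
    have h2 : |a'| + |a'| < |d - a| := by
      have := hnle' 2; rwa [two_nsmul] at this
    have h1' : |a'| < |d - a| :=
      lt_of_le_of_lt (le_add_of_nonneg_left (abs_nonneg a')) h2
    have key : ∀ b ∈ A, ¬ (|b - d| ≤ |a'|) := by
      intro b hb hbd
      apply hnm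
      have t1 : |d - a| ≤ |b - d| + |b - a| := by
        have := abs_sub_le d b a
        rwa [abs_sub_comm d b] at this
      have t1' : |d - a| ≤ |a'| + |b - a| :=
        t1.trans (add_le_add_left hbd _)
      have ha'ba : |a'| < |b - a| :=
        lt_of_add_lt_add_left (lt_of_lt_of_le h2 t1')
      refine ⟨b - a, sub_mem hb ha, ⟨2, ?_⟩, ⟨2, ?_⟩⟩
      · rw [two_nsmul]
        exact t1'.trans (add_le_add_left ha'ba.le _)
      · rw [two_nsmul]
        calc |b - a| ≤ |b - d| + |d - a| := abs_sub_le b d a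
          _ ≤ |a'| + |d - a| := add_le_add_left hbd _
          _ ≤ |d - a| + |d - a| := add_le_add_left h1'.le _
    have hnegabs : -|a'| ≤ (0 : M) := neg_nonpos.mpr (abs_nonneg a')
    refine ⟨ha', fun b hb => ⟨⟨?_, ?_⟩, ⟨?_, ?_⟩⟩⟩
    · intro h
      by_contra hc
      push_neg at hc
      refine key b hb (abs_le.mpr ⟨hnegabs.trans (sub_pos.mpr hc).le, ?_⟩)
      exact (sub_le_iff_le_add.mpr (by rwa [add_comm] at h)).trans (le_abs_self a')
    · intro h
      by_contra hc
      push_neg at hc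
      refine key b hb (abs_le.mpr ⟨?_, (sub_nonpos.mpr h).trans (abs_nonneg a')⟩)
      refine (neg_abs_le a').trans ?_
      exact (lt_sub_iff_add_lt.mpr (by rwa [add_comm] at hc)).le
    · intro h
      by_contra hc
      push_neg at hc
      refine key b hb (abs_le.mpr ⟨?_, (sub_nonpos.mpr hc.le).trans (abs_nonneg a')⟩)
      refine (neg_abs_le a').trans ?_
      exact le_sub_iff_add_le.mpr (by rwa [add_comm] at h)
    · intro h
      by_contra hc
      push_neg at hc
      refine key b hb (abs_le.mpr ⟨hnegabs.trans (sub_nonneg.mpr h), ?_⟩)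
      exact (sub_lt_iff_lt_add.mpr (by rwa [add_comm] at hc)).le.trans (le_abs_self a')
  · -- backward: a' ∈ Stab A d → DeltaLt a' (d - a)
    rintro ⟨-, hs⟩
    have hs' : ∀ e ∈ A, ((e ≤ d - a' ↔ e ≤ d) ∧ (d - a' ≤ e ↔ d ≤ e)) := by
      intro e he
      have h := hs (e + a') (add_mem he ha')
      refine ⟨⟨fun h1 => ?_, fun h1 => ?_⟩, ⟨fun h1 => ?_, fun h1 => ?_⟩⟩
      · exact (add_le_add_iff_right a').mp (h.1.mpr (le_sub_iff_add_le.mp h1))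
      · exact le_sub_iff_add_le.mpr (h.1.mp (add_le_add_left h1 a'))
      · exact (add_le_add_iff_right a').mp (h.2.mpr (sub_le_iff_le_add.mp h1))
      · exact sub_le_iff_le_add.mpr (h.2.mp (add_le_add_left h1 a'))
    have key2 : ∀ b ∈ A, |a'| < |b - d| := by
      intro b hb
      by_contra hle
      push_neg at hle
      rcases lt_trichotomy b d with hbd | hbd | hbd
      · have hdb : d - b ≤ |a'| := by
          rw [abs_sub_comm] at hle
          exact (le_abs_self (d - b)).trans hle
        rcases le_or_gt 0 a' with hpos | hneg
        · have h1 : d - a' ≤ b := sub_le_comm.mp (hdb.trans_eq (abs_of_nonneg hpos))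
          exact absurd ((hs' b hb).2.mp h1) (not_le.mpr hbd)
        · have h1 : d - -a' ≤ b := sub_le_comm.mp (hdb.trans_eq (abs_of_neg hneg))
          rw [sub_neg_eq_add] at h1
          exact absurd ((hs b hb).2.mp h1) (not_le.mpr hbd)
      · subst hbd
        exact hnm ⟨b - a, sub_mem hb ha, ⟨1, by simp⟩, ⟨1, by simp⟩⟩
      · have hdb : b - d ≤ |a'| := (le_abs_self (b - d)).trans hle
        rcases le_or_gt 0 a' with hpos | hneg
        · have h1 : b ≤ d + a' := by
            have := sub_le_iff_le_add.mp (hdb.trans_eq (abs_of_nonneg hpos))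
            rwa [add_comm] at this
          exact absurd ((hs b hb).1.mp h1) (not_le.mpr hbd)
        · have h1 : b ≤ d - a' := by
            have := sub_le_iff_le_add.mp (hdb.trans_eq (abs_of_neg hneg))
            rwa [add_comm, ← sub_eq_add_neg] at this
          exact absurd ((hs' b hb).1.mp h1) (not_le.mpr hbd)
    have hlt : |a'| < |d - a| := by
      have := key2 a ha; rwa [abs_sub_comm] at this
    refine ⟨⟨1, by rw [one_nsmul]; exact hlt.le⟩, ?_⟩
    rintro ⟨n, hn⟩
    exact hnm ⟨a', ha', ⟨n, hn⟩, ⟨1, by rw [one_nsmul]; exact hlt.le⟩⟩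
  · -- ¬ DeltaEq a' (d - a)
    rintro ⟨h1, h2⟩
    exact hnm ⟨a', ha', h2, h1⟩
end

section
/- Let A ⊆ B be divisible subgroups of M and let d ∈ M ∖ A be Archimedean over A. If d is cut-independent from B over A, then G(d/B) = G(d/A) (as subsets of M). -/
section AuxGset
variable {M : Type*} [AddCommGroup M] [LinearOrder M] [IsOrderedAddMonoid M]

lemma abs_mem_aux (A : AddSubgroup M) {a : M} (h : a ∈ A) : |a| ∈ A := by
  rcases abs_choice a with h1 | h1 <;> rw [h1]
  · exact h
  · exact neg_mem h

/-- Approximation via cut-independence. -/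
lemma close_approx_aux (A B : AddSubgroup M) (d : M) (hind : CutIndep A B d)
    {b' bk : M} (hb' : b' ∈ B) (hbk : bk ∈ B) {k : ℕ} (hk : 0 < k)
    (h1 : d < b') (h2 : b' - k • bk ≤ d) :
    ∃ a ∈ A, |d - a| ≤ bk := by
  have hex : ∃ j : ℕ, b' - (j + 1) • bk ≤ d := by
    refine ⟨k - 1, ?_⟩
    rwa [Nat.sub_add_cancel hk]
  classical
  set j := Nat.find hex with hj
  have hjle : b' - (j + 1) • bk ≤ d := Nat.find_spec hex
  have hjge : d ≤ b' - j • bk := by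
    rcases Nat.eq_zero_or_pos j with h0 | hpos
    · rw [h0]; simpa using h1.le
    · have hmin := Nat.find_min hex (m := j - 1) (by omega)
      push_neg at hmin
      have hmin' : d < b' - (j - 1 + 1) • bk := hmin
      rw [Nat.sub_add_cancel hpos] at hmin'
      exact hmin'.le
  have hlmem : b' - (j + 1) • bk ∈ B := sub_mem hb' (nsmul_mem hbk _)
  have humem : b' - j • bk ∈ B := sub_mem hb' (nsmul_mem hbk _)
  obtain ⟨a, haA, ha1, ha2⟩ := hind _ hlmem _ humem hjle hjge
  refine ⟨a, haA, ?_⟩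
  have hrw : b' - (j + 1) • bk = (b' - j • bk) - bk := by
    rw [succ_nsmul, sub_add_eq_sub_sub]
  rw [hrw] at hjle ha1
  rw [abs_le]
  constructor
  · have h := sub_le_sub hjle ha2
    rwa [sub_sub_cancel_left] at h
  · have h := sub_le_sub hjge ha1
    rwa [sub_sub_cancel] at h

/-- Key lemma: every `b ∈ B \ Stab B d` dominates (in absolute value) some
`a ∈ A \ Stab A d`. -/
lemma key_aux (A B : AddSubgroup M)
    (hAdiv : ∀ a ∈ A, ∀ n : ℕ, 0 < n → ∃ b ∈ A, n • b = a)
    (hBdiv : ∀ b ∈ B, ∀ n : ℕ, 0 < n → ∃ b' ∈ B, n • b' = b)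
    (d : M) (hd : d ∉ A) (hdB : d ∉ B) (harch : ¬ Ramified A d)
    (hind : CutIndep A B d) {b : M} (hbB : b ∈ B) (hb : b ∉ Stab B d) :
    ∃ a ∈ A, a ∉ Stab A d ∧ |a| ≤ |b| := by
  -- extract a witness between d and d + b
  have hnsc : ¬ SameCut B (d + b) d := fun h => hb ⟨hbB, h⟩
  rw [SameCut] at hnsc
  push_neg at hnsc
  obtain ⟨b'', hb''B, hfail⟩ := hnsc
  have hcases : (d ≤ b'' ∧ b'' ≤ d + b) ∨ (d + b ≤ b'' ∧ b'' ≤ d) := by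
    by_cases h1 : b'' ≤ d + b <;> by_cases h2 : b'' ≤ d
    · rcases hfail (iff_of_true h1 h2) with ⟨hc1, _⟩ | ⟨_, hc2⟩
      · exact Or.inr ⟨hc1, h2⟩
      · exact Or.inl ⟨hc2, h1⟩
    · exact Or.inl ⟨(not_le.1 h2).le, h1⟩
    · exact Or.inr ⟨(not_le.1 h1).le, h2⟩
    · rcases hfail (iff_of_false h1 h2) with ⟨_, hc1⟩ | ⟨hc2, _⟩
      · exact absurd hc1 (not_lt.2 (not_le.1 h2).le)
      · exact absurd hc2.le h1
  -- produce b' ∈ B with d < b' ≤ d + |b|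
  obtain ⟨b', hb'B, hdb', hb'd⟩ :
      ∃ b' ∈ B, d < b' ∧ b' ≤ d + |b| := by
    rcases hcases with ⟨h1, h2⟩ | ⟨h1, h2⟩
    · refine ⟨b'', hb''B, lt_of_le_of_ne h1 fun h => hdB (h ▸ hb''B), ?_⟩
      exact h2.trans (add_le_add_right (le_abs_self b) d)
    · refine ⟨b'' - b, sub_mem hb''B hbB, ?_, ?_⟩
      · have hle : d ≤ b'' - b := le_sub_iff_add_le.2 h1
        exact lt_of_le_of_ne hle fun h => hdB (h ▸ sub_mem hb''B hbB)
      · rw [sub_eq_add_neg]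
        exact add_le_add h2 (neg_le_abs b)
  have habsB : |b| ∈ B := abs_mem_aux B hbB
  have hβpos : 0 < |b| := (lt_add_iff_pos_right d).1 (hdb'.trans_le hb'd)
  -- step 1: a₀ ∈ A with |d - a₀| ≤ |b|
  obtain ⟨a₀, ha₀A, ha₀⟩ :=
    close_approx_aux A B d hind hb'B habsB (k := 1) one_pos hdb'
      (by rw [one_smul]; exact sub_le_iff_le_add.2 hb'd)
  have hne : d - a₀ ≠ 0 := fun h => hd (by rw [sub_eq_zero] at h; exact h ▸ ha₀A)
  -- Archimedean: comparable element of A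
  have hmem : DeltaMem (d - a₀) A := by
    by_contra h
    exact harch ⟨a₀, ha₀A, h⟩
  obtain ⟨a₁, ha₁A, ⟨n, hn⟩, ⟨m, hm⟩⟩ := hmem
  have hαpos : 0 < |a₁| := by
    rcases (abs_nonneg a₁).lt_or_eq with h | h
    · exact h
    · exfalso
      rw [← h, smul_zero] at hn
      exact hne (abs_eq_zero.1 (le_antisymm hn (abs_nonneg _)))
  have hnpos : 0 < n := by
    rcases Nat.eq_zero_or_pos n with h | h
    · exfalso
      rw [h, zero_smul] at hn
      exact hne (abs_eq_zero.1 (le_antisymm hn (abs_nonneg _)))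
    · exact h
  have hmpos : 0 < m := by
    rcases Nat.eq_zero_or_pos m with h | h
    · exfalso
      rw [h, zero_smul] at hm
      exact absurd hm (not_le.2 hαpos)
    · exact h
  have hαA : |a₁| ∈ A := abs_mem_aux A ha₁A
  have hαβ : |a₁| ≤ m • |b| := hm.trans (nsmul_le_nsmul_right ha₀ m)
  -- get c ∈ A, 0 < c ≤ |b|, and a'' ∈ A with |d - a''| ≤ c
  obtain ⟨c, hcA, hcpos, hcβ, a'', ha''A, ha''⟩ :
      ∃ c ∈ A, 0 < c ∧ c ≤ |b| ∧ ∃ a'' ∈ A, |d - a''| ≤ c := by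
    rcases le_or_gt (n • |a₁|) (|b|) with hcase | hcase
    · exact ⟨n • |a₁|, nsmul_mem hαA n, nsmul_pos hαpos hnpos.ne',
        hcase, a₀, ha₀A, hn⟩
    · -- refined approximation
      set k := n * m with hk
      have hkpos : 0 < k := Nat.mul_pos hnpos hmpos
      obtain ⟨bk, hbkB, hbkval⟩ := hBdiv (|b|) habsB k hkpos
      obtain ⟨c, hcA, hcval⟩ := hAdiv (n • |a₁|) (nsmul_mem hαA n) k hkpos
      have hcpos : 0 < c := by
        by_contra hcon
        push_neg at hcon
        have h := nsmul_le_nsmul_right hcon k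
        rw [hcval, smul_zero] at h
        exact absurd h (not_le.2 (nsmul_pos hαpos hnpos.ne'))
      obtain ⟨a'', ha''A, ha''⟩ := close_approx_aux A B d hind hb'B hbkB hkpos hdb'
        (by rw [hbkval]; exact sub_le_iff_le_add.2 hb'd)
      refine ⟨c, hcA, hcpos, ?_, a'', ha''A, ?_⟩
      · apply le_of_nsmul_le_nsmul_right hkpos.ne'
        rw [hcval]
        calc n • |a₁| ≤ n • (m • |b|) := nsmul_le_nsmul_right hαβ n
          _ = k • |b| := smul_smul n m (|b|)
      · apply le_of_nsmul_le_nsmul_right hkpos.ne'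
        rw [hcval]
        calc k • |d - a''| ≤ k • bk := nsmul_le_nsmul_right ha'' k
          _ = |b| := hbkval
          _ ≤ n • |a₁| := hcase.le
  -- construct the non-stabilizer element of A
  have ha''ne : a'' ≠ d := fun h => hd (h ▸ ha''A)
  have habs := abs_le.1 ha''
  rcases ha''ne.lt_or_gt with hlt | hlt
  · -- a'' < d : take a = -c
    refine ⟨-c, neg_mem hcA, ?_, ?_⟩
    · rintro ⟨-, hsc⟩
      have hiff := (hsc a'' ha''A).2
      have hL : d + -c ≤ a'' := by
        rw [← sub_eq_add_neg]
        exact sub_le_comm.mp habs.2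
      exact absurd (hiff.1 hL) (not_le.2 hlt)
    · rw [abs_neg, abs_of_pos hcpos]; exact hcβ
  · -- d < a'' : take a = c
    refine ⟨c, hcA, ?_, ?_⟩
    · rintro ⟨-, hsc⟩
      have hiff := (hsc a'' ha''A).1
      have h2' : a'' - d ≤ c := by
        have h := neg_le.1 habs.1
        rwa [neg_sub] at h
      have hL : a'' ≤ d + c := sub_le_iff_le_add'.1 h2'
      exact absurd (hiff.1 hL) (not_le.2 hlt)
    · rw [abs_of_pos hcpos]; exact hcβ

end AuxGset

/-- If `d ∈ M ∖ A` is Archimedean over `A` and cut-independent from `B` over `A`,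
then `G(d/B) = G(d/A)` (as subsets of `M`). -/
theorem Gset_eq_of_arch_cutIndep (M : Type*) [AddCommGroup M] [LinearOrder M] [IsOrderedAddMonoid M]
    (hMdiv : ∀ x : M, ∀ n : ℕ, 0 < n → ∃ y : M, n • y = x)
    (A B : AddSubgroup M) (hAB : A ≤ B)
    (hAdiv : ∀ a ∈ A, ∀ n : ℕ, 0 < n → ∃ b ∈ A, n • b = a)
    (hBdiv : ∀ b ∈ B, ∀ n : ℕ, 0 < n → ∃ b' ∈ B, n • b' = b)
    (d : M) (hd : d ∉ A) (harch : ¬ Ramified A d)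
    (hind : CutIndep A B d) :
    Gset B d = Gset A d := by
  classical
  have hdB : d ∉ B := by
    intro h
    obtain ⟨a, haA, h1, h2⟩ := hind d h d h le_rfl le_rfl
    exact hd (le_antisymm h2 h1 ▸ haA)
  unfold Gset
  rw [if_neg hdB, if_neg hd]
  ext x
  constructor
  · intro hx a haA hastab
    refine hx a (hAB haA) fun hstabB => ?_
    exact hastab ⟨haA, fun a' ha' => hstabB.2 a' (hAB ha')⟩
  · intro hx b hbB hbstab
    obtain ⟨a, haA, hastab, hab⟩ :=
      key_aux A B hAdiv hBdiv d hd hdB harch hind hbB hbstab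
    obtain ⟨h1, h2⟩ := hx a haA hastab
    constructor
    · calc -|b| ≤ -|a| := neg_le_neg hab
        _ < x := h1
    · exact h2.trans_le hab
end

section
/- Let A ⊆ B be divisible subgroups of M, let d ∈ M be ramified over A, and let a ∈ A be a ramifier of d over A. If d is cut-independent from B over A, then Δ(d − a) ∉ Δ(B), i.e., there is no b ∈ B with Δ(d − a) = Δ(b). -/
/-- If `d` is ramified over `A` with ramifier `a`, and `d` is cut-independent from `B`
over `A`, then `Δ(d − a) ∉ Δ(B)`. -/
theorem delta_not_mem_of_cutIndep (M : Type*) [AddCommGroup M] [LinearOrder M] [IsOrderedAddMonoid M]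
    (hMdiv : ∀ x : M, ∀ n : ℕ, 0 < n → ∃ y : M, n • y = x)
    (A B : AddSubgroup M) (hAB : A ≤ B)
    (hAdiv : ∀ a ∈ A, ∀ n : ℕ, 0 < n → ∃ b ∈ A, n • b = a)
    (hBdiv : ∀ b ∈ B, ∀ n : ℕ, 0 < n → ∃ b' ∈ B, n • b' = b)
    (d a : M) (hram : IsRamifier A d a)
    (hind : CutIndep A B d) :
    ¬ DeltaMem (d - a) B := by
  rintro ⟨b0, hb0B, hEq⟩
  set e := d - a with he
  have he0 : e ≠ 0 := by
    intro h
    have hda : d - a = 0 := by rw [← he]; exact h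
    exact hram.2 ⟨0, A.zero_mem, ⟨0, by simp [hda]⟩, ⟨0, by simp [hda]⟩⟩
  obtain ⟨n, hn⟩ := hEq.1
  obtain ⟨m, hm⟩ := hEq.2
  have hb0 : b0 ≠ 0 := by
    rintro rfl
    simp only [abs_zero, smul_zero] at hn
    exact he0 (abs_eq_zero.mp (le_antisymm hn (abs_nonneg _)))
  have hm0 : m ≠ 0 := by
    rintro rfl
    simp only [zero_smul] at hm
    exact hb0 (abs_eq_zero.mp (le_antisymm hm (abs_nonneg _)))
  set b := |b0| with hbdef
  have hbB : b ∈ B := by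
    rcases abs_choice b0 with h | h
    · rw [hbdef, h]; exact hb0B
    · rw [hbdef, h]; exact B.neg_mem hb0B
  have hbpos : 0 < b := abs_pos.mpr hb0
  obtain ⟨b', hb'B, hb'⟩ := hBdiv b hbB (2 * m) (by positivity)
  have hb'pos : 0 < b' := by
    by_contra h
    push_neg at h
    have : (2 * m) • b' ≤ 0 := nsmul_nonpos h (2 * m)
    rw [hb'] at this
    exact absurd this (not_le.mpr hbpos)
  have h2b' : 2 • b' ≤ |e| := by
    by_contra h
    push_neg at h
    have h1 : m • |e| < m • (2 • b') := nsmul_lt_nsmul_right hm0 h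
    rw [smul_smul, mul_comm, hb'] at h1
    exact (hm.trans_lt h1).false
  have key : ∀ x, x ∈ (A : Set M) → b' ≤ x → x ≤ n • b → False := by
    intro x hxA hx1 hx2
    have hxpos : 0 < x := lt_of_lt_of_le hb'pos hx1
    have hxabs : |x| = x := abs_of_pos hxpos
    refine hram.2 ⟨x, hxA, ⟨n * (2 * m), ?_⟩, ⟨n * m, ?_⟩⟩
    · calc |d - a| = |e| := by rw [← he]
        _ ≤ n • b := hn
        _ = n • ((2 * m) • b') := by rw [hb']
        _ = (n * (2 * m)) • b' := smul_smul n (2 * m) b'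
        _ ≤ (n * (2 * m)) • x := nsmul_le_nsmul_right hx1 _
        _ = (n * (2 * m)) • |x| := by rw [hxabs]
    · calc |x| = x := hxabs
        _ ≤ n • b := hx2
        _ ≤ n • (m • |e|) := nsmul_le_nsmul_right hm _
        _ = (n * m) • |e| := smul_smul n m |e|
        _ = (n * m) • |d - a| := by rw [← he]
  have haB : a ∈ B := hAB hram.1
  have hd : d = a + e := by rw [he]; abel
  have hb'e : b' ≤ |e| := by
    calc b' ≤ b' + b' := le_add_of_nonneg_left hb'pos.le
      _ = 2 • b' := (two_nsmul b').symm
      _ ≤ |e| := h2b'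
  rcases he0.lt_or_gt with hneg | hpos
  · -- e < 0 : interval [a - n • b, a - b']
    have habs : |e| = -e := abs_of_neg hneg
    have hne : -e ≤ n • b := le_of_eq_of_le habs.symm hn
    have hbe : b' ≤ -e := hb'e.trans_eq habs
    obtain ⟨a', ha'A, h1, h2⟩ :=
      hind (a - n • b) (B.sub_mem haB (B.nsmul_mem hbB n)) (a - b') (B.sub_mem haB hb'B)
        (by rw [hd, sub_eq_add_neg]; exact add_le_add_right (neg_le.mp hne) a)
        (by rw [hd, sub_eq_add_neg]; exact add_le_add_right (le_neg.mp hbe) a)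
    exact key (a - a') (A.sub_mem hram.1 ha'A) (le_sub_comm.mp h2) (sub_le_comm.mp h1)
  · -- 0 < e : interval [a + b', a + n • b]
    have habs : |e| = e := abs_of_pos hpos
    obtain ⟨a', ha'A, h1, h2⟩ :=
      hind (a + b') (B.add_mem haB hb'B) (a + n • b) (B.add_mem haB (B.nsmul_mem hbB n))
        (by rw [hd]; exact add_le_add_right (hb'e.trans_eq habs) a)
        (by rw [hd]; exact add_le_add_right (habs.symm.trans_le hn) a)
    exact key (a' - a) (A.sub_mem ha'A hram.1) (le_sub_iff_add_le'.mpr h1)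
      (sub_le_iff_le_add'.mpr h2)
end

section
/- Let G be a torsion-free abelian group and let l be a prime number such that the quotient G⧸lG is finite. Then the cardinality of the quotient G⧸(⋂_{N ≥ 1} l^N G) is at most 2^{ℵ₀} (the cardinality of the continuum). -/
/-- For an abelian group `G` and `n : ℕ`, the subgroup `nG = {n • x : x ∈ G}`. -/
def nsmulSubgroup (G : Type*) [AddCommGroup G] (n : ℕ) : AddSubgroup G where
  carrier := {x | ∃ y : G, x = n • y}
  zero_mem' := ⟨0, by simp⟩
  add_mem' := by
    rintro a b ⟨y, rfl⟩ ⟨z, rfl⟩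
    exact ⟨y + z, by rw [smul_add]⟩
  neg_mem' := by
    rintro a ⟨y, rfl⟩
    exact ⟨-y, by rw [smul_neg]⟩

lemma nsmulSubgroup_one (G : Type*) [AddCommGroup G] : nsmulSubgroup G 1 = ⊤ := by
  ext x
  simp only [AddSubgroup.mem_top, iff_true]
  exact ⟨x, (one_smul ℕ x).symm⟩

lemma finite_quot_pow (G : Type*) [AddCommGroup G] (l : ℕ)
    (hfin : Finite (G ⧸ nsmulSubgroup G l)) (N : ℕ) :
    Finite (G ⧸ nsmulSubgroup G (l ^ N)) := by
  induction N with
  | zero =>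
      rw [pow_zero, nsmulSubgroup_one]
      haveI : Subsingleton (G ⧸ (⊤ : AddSubgroup G)) := QuotientAddGroup.subsingleton_quotient_top
      exact Finite.of_subsingleton
  | succ N ih =>
      set f : (G ⧸ nsmulSubgroup G l) × (G ⧸ nsmulSubgroup G (l ^ N)) →
          G ⧸ nsmulSubgroup G (l ^ (N + 1)) :=
        fun p => QuotientAddGroup.mk (p.2.out + l ^ N • p.1.out) with hf
      have hsurj : Function.Surjective f := by
        intro q
        obtain ⟨x, rfl⟩ := QuotientAddGroup.mk_surjective q
        set b : G ⧸ nsmulSubgroup G (l ^ N) := QuotientAddGroup.mk x with hb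
        have hbx : -b.out + x ∈ nsmulSubgroup G (l ^ N) := by
          rw [← QuotientAddGroup.eq, QuotientAddGroup.out_eq']
        obtain ⟨z, hz⟩ := hbx
        set a : G ⧸ nsmulSubgroup G l := QuotientAddGroup.mk z with ha
        have haz : -a.out + z ∈ nsmulSubgroup G l := by
          rw [← QuotientAddGroup.eq, QuotientAddGroup.out_eq']
        obtain ⟨w, hw⟩ := haz
        refine ⟨(a, b), ?_⟩
        rw [hf]
        dsimp only
        rw [QuotientAddGroup.eq]
        refine ⟨w, ?_⟩
        have h1 : x = b.out + l ^ N • z := by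
          have := hz
          rw [neg_add_eq_iff_eq_add] at this
          rw [this]
        have h2 : z = a.out + l • w := by
          have := hw
          rw [neg_add_eq_iff_eq_add] at this
          rw [this]
        rw [h1, h2, smul_add, smul_smul, ← pow_succ]
        abel
      exact Finite.of_surjective f hsurj

/-- If `G` is a torsion-free abelian group and `l` a prime with `G⧸lG` finite, then the
quotient of `G` by `⋂_{N ≥ 1} l^N G` has cardinality at most `2^ℵ₀`. -/
theorem card_quotient_inter_le_continuum (G : Type*) [AddCommGroup G]
    (htf : ∀ (n : ℕ) (x : G), 0 < n → n • x = 0 → x = 0)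
    (l : ℕ) (hl : Nat.Prime l)
    (hfin : Finite (G ⧸ nsmulSubgroup G l)) :
    Cardinal.mk (G ⧸ ⨅ N ∈ {N : ℕ | 1 ≤ N}, nsmulSubgroup G (l ^ N)) ≤
      2 ^ Cardinal.aleph0 := by
  -- the diagonal homomorphism into the product of the quotients
  set f : G →+ ∀ N : ℕ, G ⧸ nsmulSubgroup G (l ^ N) :=
    { toFun := fun x N => QuotientAddGroup.mk x
      map_zero' := by ext N; simp
      map_add' := by intro x y; ext N; simp } with hfdef
  have hker : f.ker = ⨅ N ∈ {N : ℕ | 1 ≤ N}, nsmulSubgroup G (l ^ N) := by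
    ext x
    simp only [AddMonoidHom.mem_ker, hfdef, AddMonoidHom.coe_mk, ZeroHom.coe_mk,
      AddSubgroup.mem_iInf, Set.mem_setOf_eq, funext_iff, Pi.zero_apply]
    constructor
    · intro h N _
      have := h N
      rwa [QuotientAddGroup.eq_zero_iff] at this
    · intro h N
      rw [QuotientAddGroup.eq_zero_iff]
      rcases Nat.eq_zero_or_pos N with h0 | h1
      · subst h0; rw [pow_zero, nsmulSubgroup_one]; trivial
      · exact h N h1
  rw [← hker]
  have hinj := QuotientAddGroup.kerLift_injective f
  have hle : Cardinal.mk (G ⧸ f.ker) ≤ Cardinal.mk (∀ N : ℕ, G ⧸ nsmulSubgroup G (l ^ N)) :=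
    Cardinal.mk_le_of_injective hinj
  refine hle.trans ?_
  rw [Cardinal.mk_pi]
  have hbound : ∀ N : ℕ, Cardinal.mk (G ⧸ nsmulSubgroup G (l ^ N)) ≤ 2 ^ Cardinal.aleph0 := by
    intro N
    have := finite_quot_pow G l hfin N
    exact le_of_lt (lt_of_lt_of_le (Cardinal.lt_aleph0_of_finite _) (Cardinal.aleph0_le_continuum))
  calc (Cardinal.prod fun N : ℕ => Cardinal.mk (G ⧸ nsmulSubgroup G (l ^ N)))
      ≤ Cardinal.prod (fun _ : ℕ => 2 ^ Cardinal.aleph0) := Cardinal.prod_le_prod _ _ hbound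
    _ = (2 ^ Cardinal.aleph0) ^ (Cardinal.aleph0 : Cardinal) := by
        rw [Cardinal.prod_const]; simp
    _ = 2 ^ Cardinal.aleph0 := by
        rw [← Cardinal.power_mul, Cardinal.aleph0_mul_aleph0]
end

section
/- Let M be a torsion-free abelian group, D a pure subgroup of M, l a prime number, and N ≥ 1. Suppose e₁, e₂ ∈ M satisfy e₁ − e₂ ∈ l^{N−1}·M, e₁ ∉ D + l^N·M, and e₂ ∉ D + l^N·M. Then for every integer λ, every m ≥ 1, and every d ∈ D: λ·e₁ − d ∈ l^m·M if and only if λ·e₂ − d ∈ l^m·M. (Hence e₁ and e₂ satisfy the same quantifier-free formulas over D built from the divisibility-by-l^m predicates, i.e., they have the same l-type over D.) -/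
lemma claim_aux (M : Type*) [AddCommGroup M]
    (htf : ∀ (n : ℕ) (x : M), 0 < n → n • x = 0 → x = 0)
    (D : AddSubgroup M)
    (hpure : ∀ n : ℕ, 1 ≤ n → ∀ d ∈ D, (∃ x : M, d = n • x) → ∃ d' ∈ D, d = n • d')
    (l : ℕ) (hl : Nat.Prime l) (N : ℕ) (hN : 1 ≤ N)
    (e : M)
    (h1 : ¬ ∃ d ∈ D, ∃ c : M, e = d + l ^ N • c)
    (lam : ℤ) (m : ℕ) (hmN : N ≤ m) (d : M) (hd : d ∈ D) (c : M)
    (hc : lam • e - d = l ^ m • c) : (l : ℤ) ^ (m - N + 1) ∣ lam := by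
  by_cases hlam : lam = 0
  · simp [hlam]
  have hfin : FiniteMultiplicity (l : ℤ) lam :=
    Int.finiteMultiplicity_iff.2 ⟨by simpa using hl.ne_one, hlam⟩
  obtain ⟨μ, hlameq, hμ⟩ := hfin.exists_eq_pow_mul_and_not_dvd
  set k := multiplicity (l : ℤ) lam with hk'
  by_cases hk : m - N + 1 ≤ k
  · rw [hlameq]; exact dvd_mul_of_dvd_left (pow_dvd_pow _ hk) _
  push_neg at hk
  have hkm : k + N ≤ m := by omega
  exfalso
  have hlpos : 0 < l := hl.pos
  set j := m - k with hj
  -- rewrite hc over ℤ-smul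
  have hc' : ((l : ℤ) ^ k * μ) • e - d = ((l : ℤ) ^ k * (l : ℤ) ^ j) • c := by
    rw [← hlameq, hc, ← natCast_zsmul]
    congr 1
    push_cast
    rw [← pow_add]
    congr 1
    omega
  set x := μ • e - (l : ℤ) ^ j • c with hx
  have hd_eq : d = (l : ℤ) ^ k • x := by
    have h2 : d = ((l : ℤ) ^ k * μ) • e - ((l : ℤ) ^ k * (l : ℤ) ^ j) • c := by
      rw [sub_eq_iff_eq_add] at hc'
      rw [hc']; abel
    rw [h2, hx, smul_sub, smul_smul, smul_smul]
  have hdnat : d = l ^ k • x := by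
    rw [hd_eq, ← natCast_zsmul, Nat.cast_pow]
  obtain ⟨d', hd'D, hdd'⟩ := hpure (l ^ k) (Nat.one_le_pow _ _ hlpos) d hd ⟨x, hdnat⟩
  have hxd' : x = d' := by
    have h0 : (l ^ k) • (x - d') = 0 := by
      rw [smul_sub, ← hdnat, ← hdd', sub_self]
    have := htf (l ^ k) _ (Nat.pow_pos hlpos) h0
    rwa [sub_eq_zero] at this
  have hμe : μ • e = d' + (l : ℤ) ^ j • c := by
    rw [← hxd', hx]; abel
  have hcop : IsCoprime ((l : ℤ) ^ N) μ := by
    have hpr : Prime (l : ℤ) := Nat.prime_iff_prime_int.mp hl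
    exact (hpr.coprime_iff_not_dvd.2 hμ).pow_left
  obtain ⟨a, b, hab⟩ := hcop
  have hsplit : (l : ℤ) ^ j = (l : ℤ) ^ N * (l : ℤ) ^ (j - N) := by
    rw [← pow_add]; congr 1; omega
  have he2 : e = b • d' + (l : ℤ) ^ N • (a • e + (l : ℤ) ^ (j - N) • (b • c)) :=
    calc e = (a * (l : ℤ) ^ N + b * μ) • e := by rw [hab, one_smul]
    _ = (a * (l : ℤ) ^ N) • e + b • (μ • e) := by rw [add_smul, mul_smul b μ e]
    _ = (a * (l : ℤ) ^ N) • e + b • (d' + ((l : ℤ) ^ N * (l : ℤ) ^ (j - N)) • c) := by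
        rw [hμe, hsplit]
    _ = b • d' + (l : ℤ) ^ N • (a • e + (l : ℤ) ^ (j - N) • (b • c)) := by
        rw [smul_add, smul_add, smul_smul, smul_smul, smul_smul, smul_smul]
        ring_nf
        abel
  have hcast : (l ^ N) • (a • e + (l : ℤ) ^ (j - N) • (b • c))
      = (l : ℤ) ^ N • (a • e + (l : ℤ) ^ (j - N) • (b • c)) := by
    rw [← natCast_zsmul, Nat.cast_pow]
  exact h1 ⟨b • d', D.zsmul_mem hd'D b, a • e + (l : ℤ) ^ (j - N) • (b • c), by
    rw [hcast]; exact he2⟩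

lemma forward_aux (M : Type*) [AddCommGroup M]
    (htf : ∀ (n : ℕ) (x : M), 0 < n → n • x = 0 → x = 0)
    (D : AddSubgroup M)
    (hpure : ∀ n : ℕ, 1 ≤ n → ∀ d ∈ D, (∃ x : M, d = n • x) → ∃ d' ∈ D, d = n • d')
    (l : ℕ) (hl : Nat.Prime l) (N : ℕ) (hN : 1 ≤ N)
    (e₁ e₂ : M)
    (hclose : ∃ c : M, e₁ - e₂ = l ^ (N - 1) • c)
    (h1 : ¬ ∃ d ∈ D, ∃ c : M, e₁ = d + l ^ N • c)
    (lam : ℤ) (m : ℕ) (hm : 1 ≤ m) (d : M) (hd : d ∈ D)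
    (h : ∃ c : M, lam • e₁ - d = l ^ m • c) : ∃ c : M, lam • e₂ - d = l ^ m • c := by
  obtain ⟨c₀, hc₀⟩ := hclose
  obtain ⟨c, hc⟩ := h
  have hc₀' : e₁ - e₂ = (l : ℤ) ^ (N - 1) • c₀ := by
    rw [hc₀, ← natCast_zsmul, Nat.cast_pow]
  have hcZ : lam • e₁ - d = (l : ℤ) ^ m • c := by
    rw [hc, ← natCast_zsmul, Nat.cast_pow]
  have hcast : ∀ (y : M), (l : ℤ) ^ m • y = l ^ m • y := by
    intro y; rw [← natCast_zsmul, Nat.cast_pow]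
  have expand : lam • e₂ - d = (l : ℤ) ^ m • c - (l : ℤ) ^ (N - 1) • (lam • c₀) := by
    have h3 : lam • e₂ - d = (lam • e₁ - d) - lam • (e₁ - e₂) := by
      rw [smul_sub]; abel
    rw [h3, hcZ, hc₀', smul_comm]
  by_cases hmN : m ≤ N - 1
  · refine ⟨c - (l : ℤ) ^ (N - 1 - m) • (lam • c₀), ?_⟩
    rw [← hcast, expand, smul_sub, smul_smul ((l : ℤ) ^ m), ← pow_add,
      show m + (N - 1 - m) = N - 1 by omega]
  · have hNm : N ≤ m := by omega
    obtain ⟨μ, hμ⟩ := claim_aux M htf D hpure l hl N hN e₁ h1 lam m hNm d hd c hc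
    refine ⟨c - μ • c₀, ?_⟩
    have h4 : (l : ℤ) ^ (N - 1) • (lam • c₀) = (l : ℤ) ^ m • (μ • c₀) := by
      rw [smul_smul, smul_smul, hμ, ← mul_assoc, ← pow_add,
        show N - 1 + (m - N + 1) = m by omega]
    rw [← hcast, expand, h4, smul_sub]



/-- Let `M` be a torsion-free abelian group, `D` a pure subgroup, `l` a prime, `N ≥ 1`.
If `e₁ − e₂ ∈ l^{N−1}M` and neither `e₁` nor `e₂` lies in `D + l^N M`, then `e₁` and
`e₂` satisfy the same divisibility conditions `λ·x − d ∈ l^m M` over `D`, i.e. they have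
the same `l`-type over `D`. -/
theorem same_l_type_of_close (M : Type*) [AddCommGroup M]
    (htf : ∀ (n : ℕ) (x : M), 0 < n → n • x = 0 → x = 0)
    (D : AddSubgroup M)
    (hpure : ∀ n : ℕ, 1 ≤ n → ∀ d ∈ D, (∃ x : M, d = n • x) → ∃ d' ∈ D, d = n • d')
    (l : ℕ) (hl : Nat.Prime l) (N : ℕ) (hN : 1 ≤ N)
    (e₁ e₂ : M)
    (hclose : ∃ c : M, e₁ - e₂ = l ^ (N - 1) • c)
    (h1 : ¬ ∃ d ∈ D, ∃ c : M, e₁ = d + l ^ N • c)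
    (h2 : ¬ ∃ d ∈ D, ∃ c : M, e₂ = d + l ^ N • c) :
    ∀ (lam : ℤ) (m : ℕ), 1 ≤ m → ∀ d ∈ D,
      ((∃ c : M, lam • e₁ - d = l ^ m • c) ↔ (∃ c : M, lam • e₂ - d = l ^ m • c)) := by
  intro lam m hm d hd
  have hclose' : ∃ c : M, e₂ - e₁ = l ^ (N - 1) • c := by
    obtain ⟨c, hc⟩ := hclose
    exact ⟨-c, by rw [smul_neg, ← hc]; abel⟩
  constructor
  · exact forward_aux M htf D hpure l hl N hN e₁ e₂ hclose h1 lam m hm d hd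
  · exact forward_aux M htf D hpure l hl N hN e₂ e₁ hclose' h2 lam m hm d hd
end

section
/- Let G be a linearly ordered abelian group. The following are equivalent: (1) G is regular, i.e., for every integer n ≥ 1, every closed interval [a, b] of G containing at least n elements contains an element of nG; (2) for every integer n ≥ 1, every g ∈ G, and every convex subgroup H of G with H ≠ {0}, the coset g + H intersects nG, i.e., there exists h ∈ H with g + h ∈ nG. (Condition (2) says that for all n and g, the spine subgroup H_n(g) — the largest convex subgroup H with (g + H) ∩ nG = ∅ — is trivial.) -/
/-- A subgroup `H` of a linearly ordered abelian group is convex if it contains every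
element lying between two of its elements. -/
def IsConvexSubgroup {G : Type*} [AddCommGroup G] [LinearOrder G] [IsOrderedAddMonoid G] (H : AddSubgroup G) : Prop :=
  ∀ a ∈ H, ∀ b ∈ H, ∀ c : G, a ≤ c → c ≤ b → c ∈ H

section Aux

variable {G : Type*} [AddCommGroup G] [LinearOrder G] [IsOrderedAddMonoid G]

/-- The convex subgroup generated by an element `c`. -/
def convexHullSubgroup (c : G) : AddSubgroup G where
  carrier := {x | ∃ K : ℕ, |x| ≤ K • c}
  zero_mem' := ⟨0, by simp⟩
  add_mem' := by
    rintro x y ⟨K1, h1⟩ ⟨K2, h2⟩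
    exact ⟨K1 + K2, (abs_add_le x y).trans (by rw [add_nsmul]; exact add_le_add h1 h2)⟩
  neg_mem' := by rintro x ⟨K, h⟩; exact ⟨K, by rwa [abs_neg]⟩

lemma mem_convexHullSubgroup_iff {c x : G} :
    x ∈ convexHullSubgroup c ↔ ∃ K : ℕ, |x| ≤ K • c := Iff.rfl

lemma convexHullSubgroup_isConvex {c : G} (hc : 0 ≤ c) :
    IsConvexSubgroup (convexHullSubgroup c) := by
  rintro a ⟨K1, h1⟩ b ⟨K2, h2⟩ x hax hxb
  refine ⟨K1 + K2, abs_le.mpr ⟨?_, ?_⟩⟩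
  · have h1' : -(K1 • c) ≤ a := (abs_le.mp h1).1
    have : -((K1 + K2) • c) ≤ -(K1 • c) :=
      neg_le_neg (nsmul_le_nsmul_left hc (Nat.le_add_right _ _))
    exact this.trans (h1'.trans hax)
  · have h2' : b ≤ K2 • c := (abs_le.mp h2).2
    exact (hxb.trans h2').trans (nsmul_le_nsmul_left hc (Nat.le_add_left _ _))

lemma zmultiples_isConvex {δ : G} (hδpos : 0 < δ) (hleast : ∀ x : G, 0 < x → δ ≤ x) :
    IsConvexSubgroup (AddSubgroup.zmultiples δ) := by
  have key : ∀ K : ℕ, ∀ x : G, 0 ≤ x → x ≤ K • δ → ∃ m : ℕ, x = m • δ := by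
    intro K
    induction K with
    | zero =>
      intro x h0 hK
      refine ⟨0, ?_⟩
      simp only [zero_nsmul] at hK ⊢
      exact le_antisymm hK h0
    | succ K ih =>
      intro x h0 hK
      rcases eq_or_lt_of_le h0 with h | h
      · exact ⟨0, by simp [← h]⟩
      · have h1 : δ ≤ x := hleast x h
        have h2 : 0 ≤ x - δ := sub_nonneg.mpr h1
        have h3 : x - δ ≤ K • δ := by
          rw [succ_nsmul] at hK
          exact sub_le_iff_le_add.mpr hK
        obtain ⟨m, hm⟩ := ih (x - δ) h2 h3
        refine ⟨m + 1, ?_⟩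
        rw [add_nsmul, one_nsmul, ← hm]
        abel
  rintro p hp q hq x hpx hxq
  obtain ⟨i, hi⟩ := AddSubgroup.mem_zmultiples_iff.mp hp
  obtain ⟨j, hj⟩ := AddSubgroup.mem_zmultiples_iff.mp hq
  have hk : q - p = (j - i) • δ := by rw [sub_zsmul, hi, hj]; abel
  have hk0 : (0:G) ≤ (j - i) • δ := by rw [← hk]; exact sub_nonneg.mpr (hpx.trans hxq)
  have hji : 0 ≤ j - i := by
    by_contra hneg
    push_neg at hneg
    have : (j - i) • δ ≤ (-1 : ℤ) • δ := zsmul_le_zsmul_left hδpos.le (by omega)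
    rw [neg_zsmul, one_zsmul] at this
    have : (j - i) • δ < 0 := lt_of_le_of_lt this (neg_neg_iff_pos.mpr hδpos)
    exact absurd hk0 (not_le.mpr this)
  have hbound : x - p ≤ ((j - i).toNat) • δ := by
    have : ((j - i).toNat : ℤ) • δ = (j - i) • δ := by
      rw [Int.toNat_of_nonneg hji]
    rw [← natCast_zsmul, this, ← hk]
    exact sub_le_sub_right hxq p
  obtain ⟨m, hm⟩ := key ((j - i).toNat) (x - p) (sub_nonneg.mpr hpx) hbound
  refine AddSubgroup.mem_zmultiples_iff.mpr ⟨i + (m : ℤ), ?_⟩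
  rw [add_zsmul, hi, natCast_zsmul, ← hm]
  abel

lemma exists_min_gap {n : ℕ} (hn : 2 ≤ n) {a b : G} (s : Finset G)
    (hcard : s.card = n) (hsub : ↑s ⊆ Set.Icc a b) :
    ∃ δ : G, 0 < δ ∧ (n - 1) • δ ≤ b - a := by
  set f := s.orderIsoOfFin hcard with hf
  set g : ℕ → G := fun i => (f ⟨min i (n-1), by omega⟩ : G) with hg
  have hmem : ∀ i : ℕ, g i ∈ Set.Icc a b := fun i => hsub (f _).2
  have hlt : ∀ i : ℕ, i < n - 1 → g i < g (i+1) := by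
    intro i hi
    have hfin : (⟨min i (n-1), by omega⟩ : Fin n) < ⟨min (i+1) (n-1), by omega⟩ := by
      simp only [Fin.mk_lt_mk]
      omega
    exact Subtype.coe_lt_coe.mpr (f.strictMono hfin)
  set T := (Finset.range (n-1)).image (fun i => g (i+1) - g i) with hT
  have hTne : T.Nonempty :=
    Finset.Nonempty.image (by rw [Finset.nonempty_range_iff]; omega) _
  set δ := T.min' hTne with hδ
  have hδle : ∀ i, i < n - 1 → δ ≤ g (i+1) - g i := fun i hi =>
    Finset.min'_le T _ (Finset.mem_image_of_mem _ (Finset.mem_range.mpr hi))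
  have hδpos : 0 < δ := by
    obtain ⟨i, hi, hival⟩ := Finset.mem_image.mp (T.min'_mem hTne)
    rw [hδ, ← hival]
    exact sub_pos.mpr (hlt i (Finset.mem_range.mp hi))
  have key : ∀ i, i ≤ n - 1 → i • δ ≤ g i - g 0 := by
    intro i
    induction i with
    | zero => intro _; simp
    | succ i ih =>
      intro h
      have h1 := ih (by omega)
      have h2 := hδle i (by omega)
      rw [succ_nsmul]
      calc i • δ + δ ≤ (g i - g 0) + (g (i+1) - g i) := add_le_add h1 h2
        _ = g (i+1) - g 0 := by abel
  refine ⟨δ, hδpos, (key (n-1) le_rfl).trans ?_⟩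
  exact sub_le_sub (hmem (n-1)).2 (hmem 0).1

end Aux

/-- A linearly ordered abelian group `G` is regular (every closed interval with at least
`n` elements meets `nG`) if and only if for every `n ≥ 1`, every `g ∈ G` and every
non-trivial convex subgroup `H`, the coset `g + H` meets `nG` (i.e. every spine subgroup
`H_n(g)` is trivial). -/
theorem regular_iff_trivial_spine (G : Type*) [AddCommGroup G] [LinearOrder G] [IsOrderedAddMonoid G] :
    (∀ n : ℕ, 1 ≤ n → ∀ a b : G,
        (∃ s : Finset G, s.card = n ∧ ↑s ⊆ Set.Icc a b) →
        ∃ x ∈ Set.Icc a b, ∃ y : G, x = n • y) ↔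
    (∀ n : ℕ, 1 ≤ n → ∀ g : G, ∀ H : AddSubgroup G,
        IsConvexSubgroup H → H ≠ ⊥ → ∃ h ∈ H, ∃ y : G, g + h = n • y) := by
  constructor
  · -- (1) → (2)
    intro hreg n hn g H hconv hne
    obtain ⟨e, heH, he0⟩ : ∃ e ∈ H, e ≠ 0 := by
      by_contra hcon
      push_neg at hcon
      refine hne ?_
      ext x
      simp only [AddSubgroup.mem_bot]
      exact ⟨fun hx => hcon x hx, fun hx => hx ▸ H.zero_mem⟩
    have habs : |e| ∈ H := by
      rcases abs_choice e with h | h <;> rw [h]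
      · exact heH
      · exact neg_mem heH
    have hepos : 0 < |e| := abs_pos.mpr he0
    set e' := |e| with he'
    have hsm : StrictMono (fun i : ℕ => g + i • e') := fun i j hij =>
      add_lt_add_right (nsmul_lt_nsmul_left hepos hij) g
    set s : Finset G := (Finset.range n).image (fun i => g + i • e') with hs
    have hcard : s.card = n := by
      rw [hs, Finset.card_image_of_injective _ hsm.injective, Finset.card_range]
    have hsubset : ↑s ⊆ Set.Icc g (g + (n-1) • e') := by
      intro x hx
      rw [hs] at hx
      simp only [Finset.coe_image, Set.mem_image, Finset.mem_coe, Finset.mem_range] at hx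
      obtain ⟨i, hi, rfl⟩ := hx
      constructor
      · exact le_add_of_nonneg_right (nsmul_nonneg hepos.le i)
      · exact add_le_add_right (nsmul_le_nsmul_left hepos.le (by omega)) g
    obtain ⟨x, hx, y, hxy⟩ := hreg n hn g (g + (n-1) • e') ⟨s, hcard, hsubset⟩
    refine ⟨x - g, ?_, y, ?_⟩
    · exact hconv 0 H.zero_mem ((n-1) • e') (AddSubgroup.nsmul_mem H habs (n-1)) (x - g)
        (sub_nonneg.mpr hx.1) (sub_le_iff_le_add'.mpr hx.2)
    · rw [← hxy]; abel
  · -- (2) → (1)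
    intro hsp n hn a b ⟨s, hcard, hsub⟩
    have hab : a ≤ b := by
      obtain ⟨p, hp⟩ : s.Nonempty := Finset.card_pos.mp (by omega)
      have hmem := hsub hp
      exact hmem.1.trans hmem.2
    rcases eq_or_lt_of_le hn with h1 | h2
    · exact ⟨a, ⟨le_refl a, hab⟩, a, by rw [← h1, one_nsmul]⟩
    · -- n ≥ 2
      obtain ⟨δ0, hδ0pos, hδ0⟩ := exists_min_gap h2 s hcard hsub
      by_cases hcase : ∃ c : G, 0 < c ∧ n • c ≤ b - a
      · -- stepping argument
        obtain ⟨c, hcpos, hnc⟩ := hcase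
        have hcH : c ∈ convexHullSubgroup c :=
          ⟨1, by rw [one_nsmul]; exact le_of_eq (abs_of_pos hcpos)⟩
        have hneb : convexHullSubgroup c ≠ ⊥ := by
          intro hb
          rw [hb] at hcH
          exact hcpos.ne' (AddSubgroup.mem_bot.mp hcH)
        obtain ⟨h, hhH, y, hy⟩ :=
          hsp n hn a (convexHullSubgroup c) (convexHullSubgroup_isConvex hcpos.le) hneb
        obtain ⟨K, hK⟩ := hhH
        set D : G := n • c with hD
        have hcD : c ≤ D := by
          rw [hD]
          calc c = 1 • c := (one_nsmul c).symm
            _ ≤ n • c := nsmul_le_nsmul_left hcpos.le hn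
        have hKD : K • c ≤ (K : ℤ) • D := by
          rw [natCast_zsmul]
          exact nsmul_le_nsmul_right hcD K
        set P : ℤ → Prop := fun m => -(K : ℤ) ≤ m ∧ 0 ≤ h + m • D with hP
        have hinh : ∃ z, P z := by
          refine ⟨(K : ℤ), by omega, ?_⟩
          have h1 : -(K • c) ≤ h := neg_le_of_abs_le hK
          have h2 : -((K : ℤ) • D) ≤ h := le_trans (neg_le_neg hKD) h1
          have h3 := add_le_add_left h2 ((K : ℤ) • D)
          rwa [neg_add_cancel] at h3
        obtain ⟨m₀, ⟨hm₀K, hm₀0⟩, hleast⟩ := Int.exists_least_of_bdd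
          ⟨-(K : ℤ), fun z hz => hz.1⟩ hinh
        have hupper : h + m₀ • D ≤ b - a := by
          rcases eq_or_lt_of_le hm₀K with heq | hlt
          · have hle0 : h + m₀ • D ≤ 0 := by
              rw [← heq, neg_zsmul, ← sub_eq_add_neg]
              exact sub_nonpos.mpr ((le_of_abs_le hK).trans hKD)
            exact hle0.trans (sub_nonneg.mpr hab)
          · have hnot : ¬ P (m₀ - 1) := fun hp => by
              have := hleast _ hp
              omega
            have hneg : ¬ (0 ≤ h + (m₀ - 1) • D) := fun h0 => hnot ⟨by omega, h0⟩
            push_neg at hneg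
            have hstep : h + m₀ • D = (h + (m₀ - 1) • D) + D := by
              rw [sub_zsmul, one_zsmul]
              abel
            have : h + m₀ • D < D := by
              rw [hstep]
              have := add_lt_add_left hneg D
              rwa [zero_add] at this
            exact (this.trans_le hnc).le
        refine ⟨a + (h + m₀ • D), ⟨le_add_of_nonneg_right hm₀0, ?_⟩, y + m₀ • c, ?_⟩
        · exact add_le_of_le_sub_left hupper
        · have hcomm : m₀ • D = n • (m₀ • c) := by
            rw [hD, smul_comm]
          rw [smul_add, ← hcomm, ← hy]
          abel
      · -- no small n-divisible step: δ0 is the least positive element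
        push_neg at hcase
        have hleast : ∀ x : G, 0 < x → δ0 ≤ x := by
          intro x hx
          by_contra hlt
          push_neg at hlt
          have h1 := hcase x hx
          have h2 := hcase (δ0 - x) (sub_pos.mpr hlt)
          have hsum : n • x + n • (δ0 - x) = n • δ0 := by
            rw [← smul_add]
            congr 1
            abel
          have hlt2 : (n - 1) • δ0 + (n - 1) • δ0 < n • δ0 := by
            rw [← hsum]
            exact add_lt_add (hδ0.trans_lt h1) (hδ0.trans_lt h2)
          have hge : n • δ0 ≤ (n - 1) • δ0 + (n - 1) • δ0 := by
            rw [← add_nsmul]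
            exact nsmul_le_nsmul_left hδ0pos.le (by omega)
          exact absurd hlt2 (not_lt.mpr hge)
        have hδH : δ0 ∈ AddSubgroup.zmultiples δ0 := AddSubgroup.mem_zmultiples δ0
        have hneb : AddSubgroup.zmultiples δ0 ≠ ⊥ := by
          intro hb
          rw [hb] at hδH
          exact hδ0pos.ne' (AddSubgroup.mem_bot.mp hδH)
        obtain ⟨h, hh, y, hy⟩ := hsp n hn a (AddSubgroup.zmultiples δ0)
          (zmultiples_isConvex hδ0pos hleast) hneb
        obtain ⟨j, hj⟩ := AddSubgroup.mem_zmultiples_iff.mp hh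
        set q := j / (n : ℤ) with hq
        set r := j % (n : ℤ) with hr
        have hj' : (n : ℤ) * q + r = j := Int.mul_ediv_add_emod j n
        have hn0 : (n : ℤ) ≠ 0 := by exact_mod_cast (by omega : n ≠ 0)
        have hr0 : 0 ≤ r := Int.emod_nonneg j hn0
        have hrn : r < (n : ℤ) := Int.emod_lt_of_pos j (by exact_mod_cast (by omega : 0 < n))
        have hrδ : r • δ0 ≤ (n - 1) • δ0 := by
          have : r • δ0 ≤ ((n : ℤ) - 1) • δ0 := zsmul_le_zsmul_left hδ0pos.le (by omega)
          have hcast : ((n - 1 : ℕ) : ℤ) = (n : ℤ) - 1 := by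
            have : 1 ≤ n := hn
            push_cast [Nat.cast_sub this]
            ring
          rwa [← hcast, natCast_zsmul] at this
        refine ⟨a + r • δ0, ⟨le_add_of_nonneg_right (zsmul_nonneg hδ0pos.le hr0), ?_⟩,
          y - q • δ0, ?_⟩
        · exact add_le_of_le_sub_left (hrδ.trans hδ0)
        · have e1 : (n : ℕ) • (q • δ0) = ((n : ℤ) * q) • δ0 := by
            rw [mul_smul, ← natCast_zsmul ((q • δ0)) n]
          have e2 : h = ((n : ℤ) * q) • δ0 + r • δ0 := by
            rw [← add_zsmul, hj', hj]
          rw [smul_sub, ← hy, e1, e2]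
          abel
end
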